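/- arXiv:1903.01511 — 6 statements merged into one kernel-verified Lean document; each statement's English description precedes it below -/
import Mathlib

section
/- (Lemma 1 of the paper.) Under Assumption 1, for each i = 1, …, n: if X_i β ≥ 0 then E[2Y_i − 1] ≥ 0, and if X_i β ≤ 0 then E[2Y_i − 1] ≤ 0. -/
open MeasureTheory ProbabilityTheory

/-- Lemma 1: under Assumption 1, if `X i ⬝ β ≥ 0` then `E[2 Y i − 1] ≥ 0`,
and if `X i ⬝ β ≤ 0` then `E[2 Y i − 1] ≤ 0`. -/
theorem lemma1_conditional_moment_inequalities
    {Ω : Type*} [MeasurableSpace Ω] (P : Measure Ω) [IsProbabilityMeasure P]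
    {n K : ℕ} (hn : 1 ≤ n) (hK : 1 ≤ K)
    (X : Fin n → Fin K → ℝ) (β : Fin K → ℝ)
    (U : Fin n → Ω → ℝ) (hU : ∀ i, Measurable (U i))
    (Y : Fin n → Ω → ℝ)
    (hY : ∀ i ω, Y i ω = if 0 ≤ (∑ j, X i j * β j) + U i ω then 1 else 0)
    (hmed : ∀ i, P {ω | 0 ≤ U i ω} = 1/2)
    (hindep : iIndepFun
      (fun i ω => if 0 ≤ U i ω then (1 : ℝ) else 0) P)
    (i : Fin n) :
    (0 ≤ (∑ j, X i j * β j) → 0 ≤ ∫ ω, (2 * Y i ω - 1) ∂P) ∧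
    ((∑ j, X i j * β j) ≤ 0 → ∫ ω, (2 * Y i ω - 1) ∂P ≤ 0) := by
  classical
  set c := (∑ j, X i j * β j) with hc
  set A : Set Ω := {ω | 0 ≤ c + U i ω} with hA
  have hmeasA : MeasurableSet A :=
    measurableSet_le measurable_const (measurable_const.add (hU i))
  have hYind : Y i = A.indicator (fun _ => (1 : ℝ)) := by
    funext ω
    rw [hY]
    by_cases h : 0 ≤ c + U i ω <;> simp [Set.indicator_apply, hA, Set.mem_setOf_eq, h, ← hc]
  have hint : ∫ ω, Y i ω ∂P = (P A).toReal := by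
    rw [hYind, integral_indicator_const _ hmeasA]
    simp
    rfl
  have hInt : Integrable (Y i) P := by
    rw [hYind]
    exact (integrable_indicator_iff hmeasA).2
      (integrableOn_const (measure_ne_top _ _))
  have key : ∫ ω, (2 * Y i ω - 1) ∂P = 2 * (P A).toReal - 1 := by
    rw [integral_sub (hInt.const_mul 2) (integrable_const 1), integral_const_mul, hint]
    simp
  have hfin : P A ≠ ⊤ := measure_ne_top _ _
  constructor
  · intro hcpos
    have hsub : {ω | 0 ≤ U i ω} ⊆ A := by
      intro ω hω
      exact add_nonneg hcpos hω
    have hle : (1/2 : ENNReal) ≤ P A := by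
      rw [← hmed i]; exact measure_mono hsub
    have : (1/2 : ℝ) ≤ (P A).toReal := by
      have := ENNReal.toReal_mono hfin hle
      simpa using this
    rw [key]; linarith
  · intro hcneg
    have hsub : A ⊆ {ω | 0 ≤ U i ω} := by
      intro ω hω
      have : (0:ℝ) ≤ c + U i ω := hω
      simp only [Set.mem_setOf_eq]
      linarith
    have hle : P A ≤ (1/2 : ENNReal) := by
      rw [← hmed i]; exact measure_mono hsub
    have : (P A).toReal ≤ (1/2 : ℝ) := by
      have := ENNReal.toReal_mono (by simp) hle
      simpa using this
    rw [key]; linarith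
end

section
/- (Theorem 1 of the paper.) Under Assumption 1, a vector b ∈ ℝ^K belongs to the finite sample identified set B*_n if and only if for every i = 1, …, n: E[(2Y_i − 1)·1{X_i b ≥ 0}] ≥ 0 and E[(2Y_i − 1)·1{X_i b ≤ 0}] ≤ 0. -/
open MeasureTheory ProbabilityTheory

lemma integral_ite_nonneg {Ω : Type*} [MeasurableSpace Ω] (P : Measure Ω)
    (f : Ω → ℝ) (hf : Measurable f) :
    ∫ ω, (if 0 ≤ f ω then (1:ℝ) else 0) ∂P = (P {ω | 0 ≤ f ω}).toReal := by
  have hs : MeasurableSet {ω | 0 ≤ f ω} := measurableSet_le measurable_const hf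
  have heq : (fun ω => if 0 ≤ f ω then (1:ℝ) else 0)
      = fun ω => Set.indicator {ω | 0 ≤ f ω} (1 : Ω → ℝ) ω := by
    funext ω; by_cases h : 0 ≤ f ω <;> simp [Set.indicator, h]
  rw [heq, integral_indicator_one hs]; rfl

lemma integrable_ite_nonneg {Ω : Type*} [MeasurableSpace Ω] (P : Measure Ω)
    [IsProbabilityMeasure P] (f : Ω → ℝ) (hf : Measurable f) :
    Integrable (fun ω => if 0 ≤ f ω then (1:ℝ) else 0) P := by
  have hs : MeasurableSet {ω | 0 ≤ f ω} := measurableSet_le measurable_const hf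
  have heq : (fun ω => if 0 ≤ f ω then (1:ℝ) else 0)
      = Set.indicator {ω | 0 ≤ f ω} (fun _ => (1:ℝ)) := by
    funext ω; by_cases h : 0 ≤ f ω <;> simp [Set.indicator, h]
  rw [heq]; exact (integrable_const 1).indicator hs

/-- Membership in the finite sample identified set `B*_n`. -/
def memFSID {Ω : Type*} [MeasurableSpace Ω] (P : Measure Ω) {n K : ℕ}
    (X : Fin n → Fin K → ℝ) (Y : Fin n → Ω → ℝ) (b : Fin K → ℝ) : Prop :=
  ∃ Yt Ut : Fin n → Ω → ℝ,
    (∀ i, Measurable (Yt i)) ∧ (∀ i, Measurable (Ut i)) ∧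
    (∀ i, ∀ᵐ ω ∂P, Yt i ω = if 0 ≤ (∑ j, X i j * b j) + Ut i ω then 1 else 0) ∧
    Measure.map (fun ω => fun i => Yt i ω) P =
      Measure.map (fun ω => fun i => Y i ω) P ∧
    (∀ i, P {ω | 0 ≤ Ut i ω} = 1/2) ∧
    iIndepFun
      (fun i ω => if 0 ≤ Ut i ω then (1 : ℝ) else 0) P

/-- Theorem 1: under Assumption 1, `b ∈ B*_n` iff for every `i`,
`E[(2Yᵢ−1)·1{Xᵢb ≥ 0}] ≥ 0` and `E[(2Yᵢ−1)·1{Xᵢb ≤ 0}] ≤ 0`. -/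
theorem theorem1_finite_sample_identified_set
    {Ω : Type*} [MeasurableSpace Ω] (P : Measure Ω) [IsProbabilityMeasure P]
    {n K : ℕ} (hn : 1 ≤ n) (hK : 1 ≤ K)
    (X : Fin n → Fin K → ℝ) (β : Fin K → ℝ)
    (U : Fin n → Ω → ℝ) (hU : ∀ i, Measurable (U i))
    (Y : Fin n → Ω → ℝ)
    (hY : ∀ i ω, Y i ω = if 0 ≤ (∑ j, X i j * β j) + U i ω then 1 else 0)
    (hmed : ∀ i, P {ω | 0 ≤ U i ω} = 1/2)
    (hindep : iIndepFun
      (fun i ω => if 0 ≤ U i ω then (1 : ℝ) else 0) P)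
    (b : Fin K → ℝ) :
    memFSID P X Y b ↔
      ∀ i : Fin n,
        0 ≤ (∫ ω, (2 * Y i ω - 1) *
              (if 0 ≤ (∑ j, X i j * b j) then 1 else 0) ∂P) ∧
        (∫ ω, (2 * Y i ω - 1) *
              (if (∑ j, X i j * b j) ≤ 0 then 1 else 0) ∂P) ≤ 0 := by
  classical
  unfold memFSID
  have hSm : ∀ i : Fin n, MeasurableSet {ω | 0 ≤ (∑ j, X i j * β j) + U i ω} :=
    fun i => measurableSet_le measurable_const (measurable_const.add (hU i))
  have hBm : ∀ i : Fin n, MeasurableSet {ω | 0 ≤ U i ω} :=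
    fun i => measurableSet_le measurable_const (hU i)
  have hYfun : ∀ i, Y i = fun ω => if 0 ≤ (∑ j, X i j * β j) + U i ω then (1:ℝ) else 0 :=
    fun i => funext (hY i)
  have hYm : ∀ i, Measurable (Y i) := fun i => by
    rw [hYfun i]; exact Measurable.ite (hSm i) measurable_const measurable_const
  have hYint : ∀ i, Integrable (Y i) P := fun i => by
    rw [hYfun i]; exact integrable_ite_nonneg P _ (measurable_const.add (hU i))
  have hES : ∀ i, ∫ ω, Y i ω ∂P
      = (P {ω | 0 ≤ (∑ j, X i j * β j) + U i ω}).toReal := fun i => by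
    rw [hYfun i]; exact integral_ite_nonneg P _ (measurable_const.add (hU i))
  have hval : ∀ (i : Fin n) (k : ℝ),
      ∫ ω, (2 * Y i ω - 1) * k ∂P = (2 * (∫ ω, Y i ω ∂P) - 1) * k := by
    intro i k
    rw [integral_mul_const]
    congr 1
    rw [integral_sub ((hYint i).const_mul 2) (integrable_const 1),
      integral_const_mul, integral_const]
    simp
  have htR : ((1:ENNReal)/2).toReal = 1/2 := by simp
  constructor
  · rintro ⟨Yt, Ut, hYtm, hUtm, hae, hmap, hUtmed, -⟩ i
    have hmeasYt : Measurable fun ω => (fun i => Yt i ω) := measurable_pi_lambda _ hYtm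
    have hmeasY : Measurable fun ω => (fun i => Y i ω) := measurable_pi_lambda _ hYm
    have hEy : ∫ ω, Y i ω ∂P
        = (P {ω | 0 ≤ (∑ j, X i j * b j) + Ut i ω}).toReal := by
      have h1 : ∫ ω, Y i ω ∂P
          = ∫ v, v i ∂(Measure.map (fun ω => fun i => Y i ω) P) :=
        (integral_map hmeasY.aemeasurable
          (measurable_pi_apply i).aestronglyMeasurable).symm
      have h2 : ∫ ω, Yt i ω ∂P
          = ∫ v, v i ∂(Measure.map (fun ω => fun i => Yt i ω) P) :=
        (integral_map hmeasYt.aemeasurable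
          (measurable_pi_apply i).aestronglyMeasurable).symm
      rw [h1, ← hmap, ← h2, integral_congr_ae (hae i),
        integral_ite_nonneg P (fun ω => (∑ j, X i j * b j) + Ut i ω) (measurable_const.add (hUtm i))]
    constructor
    · rw [hval i]
      by_cases hc : 0 ≤ ∑ j, X i j * b j
      · rw [if_pos hc, mul_one]
        have hle : P {ω | 0 ≤ Ut i ω} ≤ P {ω | 0 ≤ (∑ j, X i j * b j) + Ut i ω} :=
          measure_mono fun ω hω => add_nonneg hc hω
        have h2 : (1/2 : ℝ) ≤ (P {ω | 0 ≤ (∑ j, X i j * b j) + Ut i ω}).toReal := by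
          have := ENNReal.toReal_mono (measure_ne_top P _) hle
          rwa [hUtmed i, htR] at this
        rw [hEy]; linarith
      · rw [if_neg hc, mul_zero]
    · rw [hval i]
      by_cases hc : (∑ j, X i j * b j) ≤ 0
      · rw [if_pos hc, mul_one]
        have hle : P {ω | 0 ≤ (∑ j, X i j * b j) + Ut i ω} ≤ P {ω | 0 ≤ Ut i ω} :=
          measure_mono fun ω hω => by
            simp only [Set.mem_setOf_eq] at hω ⊢; linarith
        have h2 : (P {ω | 0 ≤ (∑ j, X i j * b j) + Ut i ω}).toReal ≤ (1/2 : ℝ) := by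
          have := ENNReal.toReal_mono (measure_ne_top P _) hle
          rwa [hUtmed i, htR] at this
        rw [hEy]; linarith
      · rw [if_neg hc, mul_zero]
  · intro h
    have hp1 : ∀ i : Fin n, 0 ≤ (∑ j, X i j * b j) →
        (1/2 : ℝ) ≤ (P {ω | 0 ≤ (∑ j, X i j * β j) + U i ω}).toReal := by
      intro i hc
      have h1 := (h i).1
      rw [hval i, if_pos hc, mul_one, hES i] at h1
      linarith
    have hp2 : ∀ i : Fin n, (∑ j, X i j * b j) ≤ 0 →
        (P {ω | 0 ≤ (∑ j, X i j * β j) + U i ω}).toReal ≤ (1/2 : ℝ) := by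
      intro i hc
      have h1 := (h i).2
      rw [hval i, if_pos hc, mul_one, hES i] at h1
      linarith
    have hA : ∀ i : Fin n, 0 ≤ (∑ j, X i j * b j) →
        P ({ω | 0 ≤ U i ω} ∩ {ω | 0 ≤ (∑ j, X i j * β j) + U i ω}ᶜ) = 0 := by
      intro i hc
      by_cases hcβ : 0 ≤ ∑ j, X i j * β j
      · refine measure_mono_null ?_ measure_empty
        rintro ω ⟨h1, h2⟩
        exact h2 (add_nonneg hcβ h1)
      · push_neg at hcβ
        have hsub : {ω | 0 ≤ (∑ j, X i j * β j) + U i ω} ⊆ {ω | 0 ≤ U i ω} := by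
          intro ω hω
          simp only [Set.mem_setOf_eq] at hω ⊢
          linarith
        have hle : P {ω | 0 ≤ U i ω} ≤ P {ω | 0 ≤ (∑ j, X i j * β j) + U i ω} := by
          refine (ENNReal.toReal_le_toReal (measure_ne_top P _) (measure_ne_top P _)).mp ?_
          rw [hmed i, htR]
          exact hp1 i hc
        rw [← Set.diff_eq, measure_diff hsub (hSm i).nullMeasurableSet (measure_ne_top P _)]
        exact tsub_eq_zero_of_le hle
    have hB : ∀ i : Fin n, (∑ j, X i j * b j) ≤ 0 →
        P ({ω | 0 ≤ U i ω}ᶜ ∩ {ω | 0 ≤ (∑ j, X i j * β j) + U i ω}) = 0 := by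
      intro i hc
      by_cases hcβ : (∑ j, X i j * β j) ≤ 0
      · refine measure_mono_null ?_ measure_empty
        rintro ω ⟨h1, h2⟩
        simp only [Set.mem_compl_iff, Set.mem_setOf_eq] at h1 h2
        exact h1 (by linarith)
      · push_neg at hcβ
        have hsub : {ω | 0 ≤ U i ω} ⊆ {ω | 0 ≤ (∑ j, X i j * β j) + U i ω} := by
          intro ω hω
          simp only [Set.mem_setOf_eq] at hω ⊢
          linarith
        have hle : P {ω | 0 ≤ (∑ j, X i j * β j) + U i ω} ≤ P {ω | 0 ≤ U i ω} := by
          refine (ENNReal.toReal_le_toReal (measure_ne_top P _) (measure_ne_top P _)).mp ?_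
          rw [hmed i, htR]
          exact hp2 i hc
        have heq : {ω | 0 ≤ U i ω}ᶜ ∩ {ω | 0 ≤ (∑ j, X i j * β j) + U i ω}
            = {ω | 0 ≤ (∑ j, X i j * β j) + U i ω} \ {ω | 0 ≤ U i ω} := by
          rw [Set.diff_eq, Set.inter_comm]
        rw [heq, measure_diff hsub (hBm i).nullMeasurableSet (measure_ne_top P _)]
        exact tsub_eq_zero_of_le hle
    set Ut : Fin n → Ω → ℝ := fun i ω =>
      if 0 ≤ U i ω then
        (if 0 ≤ (∑ j, X i j * β j) + U i ω then |∑ j, X i j * b j| + 1 else 0)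
      else
        (if 0 ≤ (∑ j, X i j * β j) + U i ω then
          (if 0 < (∑ j, X i j * b j) then -(∑ j, X i j * b j)/2 else -1)
        else -(|∑ j, X i j * b j| + 1)) with hUt
    have hsign : ∀ i ω, (0 ≤ Ut i ω ↔ 0 ≤ U i ω) := by
      intro i ω
      by_cases hu : 0 ≤ U i ω
      · by_cases hs : 0 ≤ (∑ j, X i j * β j) + U i ω
        · simp only [hUt, if_pos hu, if_pos hs]
          constructor
          · intro _; exact hu
          · intro _; positivity
        · simp only [hUt, if_pos hu, if_neg hs]
          constructor
          · intro _; exact hu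
          · intro _; exact le_refl 0
      · by_cases hs : 0 ≤ (∑ j, X i j * β j) + U i ω
        · by_cases hcpos : 0 < (∑ j, X i j * b j)
          · simp only [hUt, if_neg hu, if_pos hs, if_pos hcpos]
            constructor
            · intro hcon; exfalso; linarith
            · intro hcon; exact absurd hcon hu
          · simp only [hUt, if_neg hu, if_pos hs, if_neg hcpos]
            constructor
            · intro hcon; norm_num at hcon
            · intro hcon; exact absurd hcon hu
        · simp only [hUt, if_neg hu, if_neg hs]
          constructor
          · intro hcon; exfalso
            have habs : (0:ℝ) ≤ |∑ j, X i j * b j| := abs_nonneg _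
            linarith
          · intro hcon; exact absurd hcon hu
    refine ⟨Y, Ut, hYm, ?_, ?_, rfl, ?_, ?_⟩
    · intro i
      rw [hUt]
      exact Measurable.ite (hBm i)
        (Measurable.ite (hSm i) measurable_const measurable_const)
        (Measurable.ite (hSm i) measurable_const measurable_const)
    · intro i
      have hnull : P ((if 0 ≤ (∑ j, X i j * b j) then
            ({ω | 0 ≤ U i ω} ∩ {ω | 0 ≤ (∑ j, X i j * β j) + U i ω}ᶜ) else ∅)
          ∪ (if (∑ j, X i j * b j) ≤ 0 then
            ({ω | 0 ≤ U i ω}ᶜ ∩ {ω | 0 ≤ (∑ j, X i j * β j) + U i ω}) else ∅)) = 0 := by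
        refine measure_union_null ?_ ?_
        · by_cases hc : 0 ≤ (∑ j, X i j * b j)
          · rw [if_pos hc]; exact hA i hc
          · rw [if_neg hc]; exact measure_empty
        · by_cases hc : (∑ j, X i j * b j) ≤ 0
          · rw [if_pos hc]; exact hB i hc
          · rw [if_neg hc]; exact measure_empty
      filter_upwards [measure_eq_zero_iff_ae_notMem.1 hnull] with ω hω
      by_cases hu : 0 ≤ U i ω
      · by_cases hs : 0 ≤ (∑ j, X i j * β j) + U i ω
        · have hUtv : Ut i ω = |∑ j, X i j * b j| + 1 := by
            simp only [hUt]; rw [if_pos hu, if_pos hs]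
          rw [hY i ω, if_pos hs, hUtv, if_pos (by
            have := neg_abs_le (∑ j, X i j * b j); linarith)]
        · by_cases hc : 0 ≤ (∑ j, X i j * b j)
          · exact absurd (Set.mem_union_left _
              (by rw [if_pos hc]; exact ⟨hu, hs⟩)) hω
          · push_neg at hc
            have hUtv : Ut i ω = 0 := by
              simp only [hUt]; rw [if_pos hu, if_neg hs]
            rw [hY i ω, if_neg hs, hUtv, if_neg (by rw [add_zero]; exact not_le.mpr hc)]
      · by_cases hs : 0 ≤ (∑ j, X i j * β j) + U i ω
        · by_cases hc : 0 < (∑ j, X i j * b j)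
          · have hUtv : Ut i ω = -(∑ j, X i j * b j)/2 := by
              simp only [hUt]; rw [if_neg hu, if_pos hs, if_pos hc]
            rw [hY i ω, if_pos hs, hUtv, if_pos (by linarith)]
          · exact absurd (Set.mem_union_right _
              (by rw [if_pos (not_lt.mp hc)]; exact ⟨hu, hs⟩)) hω
        · have hUtv : Ut i ω = -(|∑ j, X i j * b j| + 1) := by
            simp only [hUt]; rw [if_neg hu, if_neg hs]
          rw [hY i ω, if_neg hs, hUtv, if_neg (by
            intro hcon
            have := le_abs_self (∑ j, X i j * b j)
            linarith)]
    · intro i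
      have heq : {ω | 0 ≤ Ut i ω} = {ω | 0 ≤ U i ω} := Set.ext fun ω => hsign i ω
      rw [heq]; exact hmed i
    · have heq : (fun (i : Fin n) (ω : Ω) => if 0 ≤ Ut i ω then (1:ℝ) else 0)
          = fun i ω => if 0 ≤ U i ω then 1 else 0 := by
        funext i ω; exact if_congr (hsign i ω) rfl rfl
      rw [heq]; exact hindep
end

section
/- (Forward direction of Theorem 2 of the paper.) Under Assumption 1, if b ∈ B*_n then for every v ∈ ℝ^K: E[n^{-1} Σ_{i=1}^n (2Y_i − 1)·1{X_i b ≥ 0}·1{X_i v < 0}] ≥ 0 and E[n^{-1} Σ_{i=1}^n (1 − 2Y_i)·1{X_i b ≤ 0}·1{X_i v > 0}] ≥ 0. -/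
open MeasureTheory ProbabilityTheory

/-- If `P {0 ≤ U} = 1/2` then shifting by a nonnegative (resp. nonpositive)
constant moves the probability above (resp. below) `1/2`. -/
lemma aux_half {Ω : Type*} [MeasurableSpace Ω] (P : Measure Ω) [IsProbabilityMeasure P]
    (Ut : Ω → ℝ) (hmed : P {ω | 0 ≤ Ut ω} = 1/2) (c : ℝ) :
    (0 ≤ c → (1:ℝ)/2 ≤ (P {ω | 0 ≤ c + Ut ω}).toReal) ∧
    (c ≤ 0 → (P {ω | 0 ≤ c + Ut ω}).toReal ≤ 1/2) := by
  have h2 : ((1:ENNReal)/2).toReal = 1/2 := by simp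
  constructor
  · intro hc
    have hsub : {ω | 0 ≤ Ut ω} ⊆ {ω | 0 ≤ c + Ut ω} := fun ω hω => add_nonneg hc hω
    have hle := measure_mono (μ := P) hsub
    rw [hmed] at hle
    calc (1:ℝ)/2 = ((1:ENNReal)/2).toReal := h2.symm
      _ ≤ (P {ω | 0 ≤ c + Ut ω}).toReal :=
          ENNReal.toReal_mono (measure_ne_top P _) hle
  · intro hc
    have hsub : {ω | 0 ≤ c + Ut ω} ⊆ {ω | 0 ≤ Ut ω} := by
      intro ω hω
      simp only [Set.mem_setOf_eq] at hω ⊢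
      linarith
    have hle := measure_mono (μ := P) hsub
    rw [hmed] at hle
    calc (P {ω | 0 ≤ c + Ut ω}).toReal ≤ ((1:ENNReal)/2).toReal :=
          ENNReal.toReal_mono (by norm_num) hle
      _ = 1/2 := h2

/-- Forward direction of Theorem 2: if `b ∈ B*_n` then for every `v ∈ ℝ^K` the
aggregated moment inequalities hold. -/
theorem theorem2_forward
    {Ω : Type*} [MeasurableSpace Ω] (P : Measure Ω) [IsProbabilityMeasure P]
    {n K : ℕ} (hn : 1 ≤ n) (hK : 1 ≤ K)
    (X : Fin n → Fin K → ℝ) (β : Fin K → ℝ)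
    (U : Fin n → Ω → ℝ) (hU : ∀ i, Measurable (U i))
    (Y : Fin n → Ω → ℝ)
    (hY : ∀ i ω, Y i ω = if 0 ≤ (∑ j, X i j * β j) + U i ω then 1 else 0)
    (hmed : ∀ i, P {ω | 0 ≤ U i ω} = 1/2)
    (hindep : iIndepFun
      (fun i ω => if 0 ≤ U i ω then (1 : ℝ) else 0) P)
    (b : Fin K → ℝ) (hb : memFSID P X Y b) :
    ∀ v : Fin K → ℝ,
      0 ≤ (∫ ω, (n : ℝ)⁻¹ * ∑ i, (2 * Y i ω - 1) *
            (if 0 ≤ (∑ j, X i j * b j) then 1 else 0) *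
            (if (∑ j, X i j * v j) < 0 then 1 else 0) ∂P) ∧
      0 ≤ (∫ ω, (n : ℝ)⁻¹ * ∑ i, (1 - 2 * Y i ω) *
            (if (∑ j, X i j * b j) ≤ 0 then 1 else 0) *
            (if 0 < (∑ j, X i j * v j) then 1 else 0) ∂P) := by
  obtain ⟨Yt, Ut, hYtm, hUtm, hYtU, hmap, hUtmed, _⟩ := hb
  intro v
  -- measurability and integrability of Y
  have hYm : ∀ i, Measurable (Y i) := by
    intro i
    have h : Y i = fun ω => if 0 ≤ (∑ j, X i j * β j) + U i ω then 1 else 0 :=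
      funext (hY i)
    rw [h]
    exact Measurable.ite (measurableSet_le measurable_const
      (measurable_const.add (hU i))) measurable_const measurable_const
  have hYint : ∀ i, Integrable (Y i) P := by
    intro i
    refine (integrable_const (1:ℝ)).mono' (hYm i).aestronglyMeasurable ?_
    filter_upwards with ω
    rw [hY i ω]
    split <;> simp
  have hYtint : ∀ i, Integrable (Yt i) P := by
    intro i
    refine (integrable_const (1:ℝ)).mono' (hYtm i).aestronglyMeasurable ?_
    filter_upwards [hYtU i] with ω hω
    rw [hω]
    split <;> simp
  -- equality of expectations
  have hEeq : ∀ i, ∫ ω, Y i ω ∂P = ∫ ω, Yt i ω ∂P := by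
    intro i
    have hYpm : Measurable (fun ω => fun j => Y j ω) := measurable_pi_lambda _ hYm
    have hYtpm : Measurable (fun ω => fun j => Yt j ω) := measurable_pi_lambda _ hYtm
    have h1 : ∫ ω, Y i ω ∂P = ∫ f, f i ∂(Measure.map (fun ω => fun j => Y j ω) P) :=
      (integral_map hYpm.aemeasurable
        (measurable_pi_apply i).aestronglyMeasurable).symm
    have h2 : ∫ ω, Yt i ω ∂P = ∫ f, f i ∂(Measure.map (fun ω => fun j => Yt j ω) P) :=
      (integral_map hYtpm.aemeasurable
        (measurable_pi_apply i).aestronglyMeasurable).symm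
    rw [h1, h2, hmap]
  -- expectation of Yt as a probability
  have hEYt : ∀ i, ∫ ω, Yt i ω ∂P
      = (P {ω | 0 ≤ (∑ j, X i j * b j) + Ut i ω}).toReal := by
    intro i
    have hs : MeasurableSet {ω | 0 ≤ (∑ j, X i j * b j) + Ut i ω} :=
      measurableSet_le measurable_const (measurable_const.add (hUtm i))
    rw [integral_congr_ae (hYtU i)]
    have hind : (fun ω => if 0 ≤ (∑ j, X i j * b j) + Ut i ω then (1:ℝ) else 0)
        = Set.indicator {ω | 0 ≤ (∑ j, X i j * b j) + Ut i ω} (fun _ => (1:ℝ)) := by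
      funext ω
      simp [Set.indicator_apply, Set.mem_setOf_eq]
    rw [hind, integral_indicator_const (1:ℝ) hs]
    simp
    rfl
  -- key bounds
  have hlow : ∀ i, 0 ≤ (∑ j, X i j * b j) → (1:ℝ)/2 ≤ ∫ ω, Y i ω ∂P := by
    intro i hc
    rw [hEeq i, hEYt i]
    exact (aux_half P (Ut i) (hUtmed i) _).1 hc
  have hhigh : ∀ i, (∑ j, X i j * b j) ≤ 0 → ∫ ω, Y i ω ∂P ≤ 1/2 := by
    intro i hc
    rw [hEeq i, hEYt i]
    exact (aux_half P (Ut i) (hUtmed i) _).2 hc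
  have hE2 : ∀ i, ∫ ω, (2 * Y i ω - 1) ∂P = 2 * (∫ ω, Y i ω ∂P) - 1 := by
    intro i
    rw [integral_sub ((hYint i).const_mul 2) (integrable_const 1),
      integral_const_mul, integral_const]
    simp
  have hE3 : ∀ i, ∫ ω, (1 - 2 * Y i ω) ∂P = 1 - 2 * (∫ ω, Y i ω ∂P) := by
    intro i
    rw [integral_sub (integrable_const 1) ((hYint i).const_mul 2),
      integral_const_mul, integral_const]
    simp
  constructor
  · have hint : ∀ i ∈ Finset.univ, Integrable (fun ω => (2 * Y i ω - 1) *
        (if 0 ≤ (∑ j, X i j * b j) then (1:ℝ) else 0) *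
        (if (∑ j, X i j * v j) < 0 then (1:ℝ) else 0)) P := fun i _ =>
      ((((hYint i).const_mul 2).sub (integrable_const 1)).mul_const _).mul_const _
    rw [integral_const_mul, integral_finset_sum Finset.univ hint]
    refine mul_nonneg (by positivity) (Finset.sum_nonneg fun i _ => ?_)
    rw [integral_mul_const, integral_mul_const, hE2 i]
    by_cases hv : (∑ j, X i j * v j) < 0
    · by_cases hc : 0 ≤ (∑ j, X i j * b j)
      · have := hlow i hc
        simp only [if_pos hv, if_pos hc, mul_one]
        linarith
      · simp [hc]
    · simp [hv]
  · have hint : ∀ i ∈ Finset.univ, Integrable (fun ω => (1 - 2 * Y i ω) *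
        (if (∑ j, X i j * b j) ≤ 0 then (1:ℝ) else 0) *
        (if 0 < (∑ j, X i j * v j) then (1:ℝ) else 0)) P := fun i _ =>
      (((integrable_const 1).sub ((hYint i).const_mul 2)).mul_const _).mul_const _
    rw [integral_const_mul, integral_finset_sum Finset.univ hint]
    refine mul_nonneg (by positivity) (Finset.sum_nonneg fun i _ => ?_)
    rw [integral_mul_const, integral_mul_const, hE3 i]
    by_cases hv : 0 < (∑ j, X i j * v j)
    · by_cases hc : (∑ j, X i j * b j) ≤ 0
      · have := hhigh i hc
        simp only [if_pos hv, if_pos hc, mul_one]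
        linarith
      · simp [hc]
    · simp [hv]
end

section
/- (Converse direction of Theorem 2 of the paper.) Under Assumption 1, let 𝒱_u, 𝒱_l ⊆ ℝ^K be sets such that: for every w ∈ ℝ^K there exists v ∈ 𝒱_u with 1{X_i v ≥ 0} = 1{X_i w ≥ 0} for all i = 1, …, n, and for every w ∈ ℝ^K there exists v ∈ 𝒱_l with 1{X_i v ≤ 0} = 1{X_i w ≤ 0} for all i = 1, …, n. If b ∈ ℝ^K satisfies E[n^{-1} Σ_{i=1}^n (2Y_i − 1)·1{X_i b ≥ 0}·1{X_i v < 0}] ≥ 0 for all v ∈ 𝒱_u and E[n^{-1} Σ_{i=1}^n (1 − 2Y_i)·1{X_i b ≤ 0}·1{X_i v > 0}] ≥ 0 for all v ∈ 𝒱_l, then for every i = 1, …, n: E[(2Y_i − 1)·1{X_i b ≥ 0}] ≥ 0 and E[(1 − 2Y_i)·1{X_i b ≤ 0}] ≥ 0 (equivalently, b ∈ B*_n). -/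
open MeasureTheory ProbabilityTheory
open scoped ENNReal

section helpers
variable {Ω : Type*} [MeasurableSpace Ω] (P : Measure Ω) [IsProbabilityMeasure P]
set_option linter.unusedSectionVars false

lemma aux_ind_integral {g : Ω → ℝ} (hg : Measurable g) :
    ∫ ω, (if 0 ≤ g ω then (1:ℝ) else 0) ∂P = (P {ω | 0 ≤ g ω}).toReal := by
  have hs : MeasurableSet {ω | 0 ≤ g ω} := measurableSet_le measurable_const hg
  have h : (fun ω => if 0 ≤ g ω then (1:ℝ) else 0)
      = Set.indicator {ω | 0 ≤ g ω} (fun _ => 1) := by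
    ext ω; simp [Set.indicator_apply]
  rw [h, integral_indicator_const (1:ℝ) hs]; simp; rfl

lemma aux_ind_integrable {g : Ω → ℝ} (hg : Measurable g) :
    Integrable (fun ω => if 0 ≤ g ω then (1:ℝ) else 0) P := by
  have hs : MeasurableSet {ω | 0 ≤ g ω} := measurableSet_le measurable_const hg
  have h : (fun ω => if 0 ≤ g ω then (1:ℝ) else 0)
      = Set.indicator {ω | 0 ≤ g ω} (fun _ => 1) := by
    ext ω; simp [Set.indicator_apply]
  rw [h]; exact (integrable_const (1:ℝ)).indicator hs

lemma aux_half_le {p : ℝ≥0∞} (h : p ≤ 1) (h2 : 1/2 ≤ p.toReal) : 1/2 ≤ p := by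
  have hfin : p ≠ ⊤ := (h.trans_lt ENNReal.one_lt_top).ne
  rw [← ENNReal.ofReal_toReal hfin,
    show (1/2 : ℝ≥0∞) = ENNReal.ofReal (1/2) by norm_num [ENNReal.ofReal_div_of_pos]]
  exact ENNReal.ofReal_le_ofReal h2

lemma aux_le_half {p : ℝ≥0∞} (h : p ≤ 1) (h2 : p.toReal ≤ 1/2) : p ≤ 1/2 := by
  have hfin : p ≠ ⊤ := (h.trans_lt ENNReal.one_lt_top).ne
  rw [← ENNReal.ofReal_toReal hfin,
    show (1/2 : ℝ≥0∞) = ENNReal.ofReal (1/2) by norm_num [ENNReal.ofReal_div_of_pos]]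
  exact ENNReal.ofReal_le_ofReal h2

end helpers

open MeasureTheory ProbabilityTheory

/-- Converse direction of Theorem 2: if the aggregated moment inequalities hold for
representative collections `𝒱_u` and `𝒱_l`, then the pointwise moment inequalities hold
for every `i`; equivalently, `b ∈ B*_n`. -/
theorem theorem2_converse
    {Ω : Type*} [MeasurableSpace Ω] (P : Measure Ω) [IsProbabilityMeasure P]
    {n K : ℕ} (hn : 1 ≤ n) (hK : 1 ≤ K)
    (X : Fin n → Fin K → ℝ) (β : Fin K → ℝ)
    (U : Fin n → Ω → ℝ) (hU : ∀ i, Measurable (U i))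
    (Y : Fin n → Ω → ℝ)
    (hY : ∀ i ω, Y i ω = if 0 ≤ (∑ j, X i j * β j) + U i ω then 1 else 0)
    (hmed : ∀ i, P {ω | 0 ≤ U i ω} = 1/2)
    (hindep : iIndepFun
      (fun i ω => if 0 ≤ U i ω then (1 : ℝ) else 0) P)
    (Vu Vl : Set (Fin K → ℝ))
    (hVu : ∀ w : Fin K → ℝ, ∃ v ∈ Vu, ∀ i : Fin n,
      (0 ≤ (∑ j, X i j * v j) ↔ 0 ≤ (∑ j, X i j * w j)))
    (hVl : ∀ w : Fin K → ℝ, ∃ v ∈ Vl, ∀ i : Fin n,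
      ((∑ j, X i j * v j) ≤ 0 ↔ (∑ j, X i j * w j) ≤ 0))
    (b : Fin K → ℝ)
    (hmomu : ∀ v ∈ Vu,
      0 ≤ (∫ ω, (n : ℝ)⁻¹ * ∑ i, (2 * Y i ω - 1) *
            (if 0 ≤ (∑ j, X i j * b j) then 1 else 0) *
            (if (∑ j, X i j * v j) < 0 then 1 else 0) ∂P))
    (hmoml : ∀ v ∈ Vl,
      0 ≤ (∫ ω, (n : ℝ)⁻¹ * ∑ i, (1 - 2 * Y i ω) *
            (if (∑ j, X i j * b j) ≤ 0 then 1 else 0) *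
            (if 0 < (∑ j, X i j * v j) then 1 else 0) ∂P)) :
    (∀ i : Fin n,
      0 ≤ (∫ ω, (2 * Y i ω - 1) *
            (if 0 ≤ (∑ j, X i j * b j) then 1 else 0) ∂P) ∧
      0 ≤ (∫ ω, (1 - 2 * Y i ω) *
            (if (∑ j, X i j * b j) ≤ 0 then 1 else 0) ∂P)) ∧
    memFSID P X Y b := by
  classical
  set S : Fin n → Set Ω := fun i => {ω | 0 ≤ (∑ j, X i j * β j) + U i ω} with hS
  have hgm : ∀ i, Measurable fun ω => (∑ j, X i j * β j) + U i ω :=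
    fun i => measurable_const.add (hU i)
  have hSm : ∀ i, MeasurableSet (S i) :=
    fun i => measurableSet_le measurable_const (hgm i)
  have hUSm : ∀ i, MeasurableSet {ω | 0 ≤ U i ω} :=
    fun i => measurableSet_le measurable_const (hU i)
  have hYfun : ∀ i, Y i = fun ω => if 0 ≤ (∑ j, X i j * β j) + U i ω then 1 else 0 :=
    fun i => funext (hY i)
  have hYm : ∀ i, Measurable (Y i) := fun i => by
    rw [hYfun i]
    exact Measurable.ite (hSm i) measurable_const measurable_const
  have hYint : ∀ i, Integrable (Y i) P := fun i => by
    rw [hYfun i]; exact aux_ind_integrable P (hgm i)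
  have hEY : ∀ i, ∫ ω, Y i ω ∂P = (P (S i)).toReal := fun i => by
    rw [hYfun i]; exact aux_ind_integral P (hgm i)
  have h2Yint : ∀ i, Integrable (fun ω => 2 * Y i ω - 1) P :=
    fun i => ((hYint i).const_mul 2).sub (integrable_const 1)
  have h2Yint' : ∀ i, Integrable (fun ω => 1 - 2 * Y i ω) P :=
    fun i => (integrable_const 1).sub ((hYint i).const_mul 2)
  have hE : ∀ i, ∫ ω, (2 * Y i ω - 1) ∂P = 2 * (P (S i)).toReal - 1 := fun i => by
    rw [integral_sub ((hYint i).const_mul 2) (integrable_const 1),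
      integral_const_mul, hEY i]
    simp
  have hE' : ∀ i, ∫ ω, (1 - 2 * Y i ω) ∂P = 1 - 2 * (P (S i)).toReal := fun i => by
    rw [integral_sub (integrable_const 1) ((hYint i).const_mul 2),
      integral_const_mul, hEY i]
    simp
  -- monotonicity facts
  have hsub1 : ∀ i, 0 ≤ (∑ j, X i j * β j) → {ω | 0 ≤ U i ω} ⊆ S i := by
    intro i ha ω hω
    simp only [hS, Set.mem_setOf_eq] at hω ⊢
    linarith
  have hsub2 : ∀ i, (∑ j, X i j * β j) ≤ 0 → S i ⊆ {ω | 0 ≤ U i ω} := by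
    intro i ha ω hω
    simp only [hS, Set.mem_setOf_eq] at hω ⊢
    linarith
  have M1 : ∀ i, 0 ≤ (∑ j, X i j * β j) → 1/2 ≤ (P (S i)).toReal := by
    intro i ha
    have h := measure_mono (μ := P) (hsub1 i ha)
    rw [hmed i] at h
    have := ENNReal.toReal_mono (measure_ne_top P _) h
    calc (1:ℝ)/2 = ((1:ℝ≥0∞)/2).toReal := by norm_num
    _ ≤ _ := this
  have M2 : ∀ i, (∑ j, X i j * β j) ≤ 0 → (P (S i)).toReal ≤ 1/2 := by
    intro i ha
    have h := measure_mono (μ := P) (hsub2 i ha)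
    rw [hmed i] at h
    have := ENNReal.toReal_mono (by norm_num) h
    calc (P (S i)).toReal ≤ ((1:ℝ≥0∞)/2).toReal := this
    _ = 1/2 := by norm_num
  have hnpos : (0:ℝ) < (n:ℝ)⁻¹ := by
    have : (0:ℝ) < n := by exact_mod_cast hn
    positivity
  -- pointwise bounds from aggregated moment inequalities
  have pw1 : ∀ i, 0 ≤ (∑ j, X i j * b j) → 1/2 ≤ (P (S i)).toReal := by
    intro i hc
    by_cases ha : 0 ≤ (∑ j, X i j * β j)
    · exact M1 i ha
    push_neg at ha
    obtain ⟨v, hv, hvs⟩ := hVu β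
    have hsum := hmomu v hv
    have hint : ∀ j : Fin n, Integrable (fun ω => (2 * Y j ω - 1) *
        (if 0 ≤ (∑ jj, X j jj * b jj) then 1 else 0) *
        (if (∑ jj, X j jj * v jj) < 0 then 1 else 0)) P :=
      fun j => ((h2Yint j).mul_const _).mul_const _
    rw [integral_const_mul, integral_finset_sum _ (fun j _ => hint j)] at hsum
    have hTval : ∀ j : Fin n, (∫ ω, (2 * Y j ω - 1) *
        (if 0 ≤ (∑ jj, X j jj * b jj) then 1 else 0) *
        (if (∑ jj, X j jj * v jj) < 0 then 1 else 0) ∂P)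
        = (2 * (P (S j)).toReal - 1) *
        (if 0 ≤ (∑ jj, X j jj * b jj) then 1 else 0) *
        (if (∑ jj, X j jj * v jj) < 0 then 1 else 0) := by
      intro j
      rw [integral_mul_const, integral_mul_const, hE j]
    set T : Fin n → ℝ := fun j => (2 * (P (S j)).toReal - 1) *
        (if 0 ≤ (∑ jj, X j jj * b jj) then 1 else 0) *
        (if (∑ jj, X j jj * v jj) < 0 then 1 else 0) with hT
    rw [Finset.sum_congr rfl (fun j _ => hTval j)] at hsum
    have hTnonpos : ∀ j, T j ≤ 0 := by
      intro j
      by_cases haj : 0 ≤ (∑ jj, X j jj * β jj)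
      · have : ¬ (∑ jj, X j jj * v jj) < 0 := not_lt.mpr ((hvs j).mpr haj)
        simp [hT, this]
      · push_neg at haj
        have h1 : 2 * (P (S j)).toReal - 1 ≤ 0 := by
          have := M2 j haj.le; linarith
        have c1 : (0:ℝ) ≤ (if 0 ≤ (∑ jj, X j jj * b jj) then 1 else 0) := by positivity
        have c2 : (0:ℝ) ≤ (if (∑ jj, X j jj * v jj) < 0 then 1 else 0) := by positivity
        exact mul_nonpos_of_nonpos_of_nonneg (mul_nonpos_of_nonpos_of_nonneg h1 c1) c2
    have hsum' : 0 ≤ ∑ j, T j := by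
      by_contra h
      push_neg at h
      nlinarith
    have hTi : 0 ≤ T i := by
      have hle : ∑ j, T j ≤ ∑ j : Fin n, (if j = i then T i else 0) := by
        refine Finset.sum_le_sum (fun j _ => ?_)
        by_cases h : j = i
        · simp [h]
        · simp only [if_neg h]; exact hTnonpos j
      rw [Finset.sum_ite_eq' Finset.univ i (fun _ => T i)] at hle
      simp at hle
      linarith
    have hvi : (∑ jj, X i jj * v jj) < 0 :=
      lt_of_not_ge fun h => absurd ((hvs i).mp h) (not_le.mpr ha)
    rw [hT] at hTi
    simp only [if_pos hc, if_pos hvi, mul_one] at hTi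
    linarith
  have pw2 : ∀ i, (∑ j, X i j * b j) ≤ 0 → (P (S i)).toReal ≤ 1/2 := by
    intro i hc
    by_cases ha : (∑ j, X i j * β j) ≤ 0
    · exact M2 i ha
    push_neg at ha
    obtain ⟨v, hv, hvs⟩ := hVl β
    have hsum := hmoml v hv
    have hint : ∀ j : Fin n, Integrable (fun ω => (1 - 2 * Y j ω) *
        (if (∑ jj, X j jj * b jj) ≤ 0 then 1 else 0) *
        (if 0 < (∑ jj, X j jj * v jj) then 1 else 0)) P :=
      fun j => ((h2Yint' j).mul_const _).mul_const _
    rw [integral_const_mul, integral_finset_sum _ (fun j _ => hint j)] at hsum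
    have hTval : ∀ j : Fin n, (∫ ω, (1 - 2 * Y j ω) *
        (if (∑ jj, X j jj * b jj) ≤ 0 then 1 else 0) *
        (if 0 < (∑ jj, X j jj * v jj) then 1 else 0) ∂P)
        = (1 - 2 * (P (S j)).toReal) *
        (if (∑ jj, X j jj * b jj) ≤ 0 then 1 else 0) *
        (if 0 < (∑ jj, X j jj * v jj) then 1 else 0) := by
      intro j
      rw [integral_mul_const, integral_mul_const, hE' j]
    set T : Fin n → ℝ := fun j => (1 - 2 * (P (S j)).toReal) *
        (if (∑ jj, X j jj * b jj) ≤ 0 then 1 else 0) *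
        (if 0 < (∑ jj, X j jj * v jj) then 1 else 0) with hT
    rw [Finset.sum_congr rfl (fun j _ => hTval j)] at hsum
    have hTnonpos : ∀ j, T j ≤ 0 := by
      intro j
      by_cases haj : (∑ jj, X j jj * β jj) ≤ 0
      · have : ¬ 0 < (∑ jj, X j jj * v jj) := not_lt.mpr ((hvs j).mpr haj)
        simp [hT, this]
      · push_neg at haj
        have h1 : 1 - 2 * (P (S j)).toReal ≤ 0 := by
          have := M1 j haj.le; linarith
        have c1 : (0:ℝ) ≤ (if (∑ jj, X j jj * b jj) ≤ 0 then 1 else 0) := by positivity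
        have c2 : (0:ℝ) ≤ (if 0 < (∑ jj, X j jj * v jj) then 1 else 0) := by positivity
        exact mul_nonpos_of_nonpos_of_nonneg (mul_nonpos_of_nonpos_of_nonneg h1 c1) c2
    have hsum' : 0 ≤ ∑ j, T j := by
      by_contra h
      push_neg at h
      nlinarith
    have hTi : 0 ≤ T i := by
      have hle : ∑ j, T j ≤ ∑ j : Fin n, (if j = i then T i else 0) := by
        refine Finset.sum_le_sum (fun j _ => ?_)
        by_cases h : j = i
        · simp [h]
        · simp only [if_neg h]; exact hTnonpos j
      rw [Finset.sum_ite_eq' Finset.univ i (fun _ => T i)] at hle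
      simp at hle
      linarith
    have hvi : 0 < (∑ jj, X i jj * v jj) :=
      lt_of_not_ge fun h => absurd ((hvs i).mp h) (not_le.mpr ha)
    rw [hT] at hTi
    simp only [if_pos hc, if_pos hvi, mul_one] at hTi
    linarith
  constructor
  · intro i
    constructor
    · by_cases hc : 0 ≤ (∑ j, X i j * b j)
      · simp only [if_pos hc, mul_one]
        rw [hE i]
        have := pw1 i hc
        linarith
      · simp [if_neg hc]
    · by_cases hc : (∑ j, X i j * b j) ≤ 0
      · simp only [if_pos hc, mul_one]
        rw [hE' i]
        have := pw2 i hc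
        linarith
      · simp [if_neg hc]
  -- membership in the finite sample identified set
  · set Ut : Fin n → Ω → ℝ := fun i ω =>
      if 0 ≤ U i ω then
        (if 0 ≤ (∑ j, X i j * β j) + U i ω then |∑ j, X i j * b j| + 1
         else if (∑ j, X i j * b j) < 0 then 0 else 1)
      else
        (if 0 ≤ (∑ j, X i j * β j) + U i ω then
            (if 0 < (∑ j, X i j * b j) then -(∑ j, X i j * b j) else -1)
         else -(|∑ j, X i j * b j| + 1)) with hUt
    have hsign : ∀ i ω, (0 ≤ Ut i ω) ↔ (0 ≤ U i ω) := by
      intro i ω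
      have habs := abs_nonneg (∑ j, X i j * b j)
      by_cases h1 : 0 ≤ U i ω
      · simp only [hUt, if_pos h1]
        refine iff_of_true ?_ h1
        split_ifs <;> linarith
      · simp only [hUt, if_neg h1]
        refine iff_of_false (not_le.mpr ?_) h1
        split_ifs with h3 h4
        · linarith
        · linarith
        · linarith
    have hUtm : ∀ i, Measurable (Ut i) := by
      intro i
      simp only [hUt]
      exact Measurable.ite (hUSm i)
        (Measurable.ite (hSm i) measurable_const measurable_const)
        (Measurable.ite (hSm i) measurable_const measurable_const)
    have hnull1 : ∀ i, 0 ≤ (∑ j, X i j * b j) → P ({ω | 0 ≤ U i ω} \ S i) = 0 := by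
      intro i hc
      by_cases ha : 0 ≤ (∑ j, X i j * β j)
      · have hempty : {ω | 0 ≤ U i ω} \ S i = ∅ :=
          Set.eq_empty_iff_forall_notMem.mpr fun ω hω => hω.2 (hsub1 i ha hω.1)
        rw [hempty]; exact measure_empty
      · push_neg at ha
        have hP1 : P (S i) ≤ 1/2 := by
          have h := measure_mono (μ := P) (hsub2 i ha.le); rw [hmed i] at h; exact h
        have hP2 : (1:ℝ≥0∞)/2 ≤ P (S i) := aux_half_le prob_le_one (pw1 i hc)
        have hPS : P (S i) = 1/2 := le_antisymm hP1 hP2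
        rw [measure_diff (hsub2 i ha.le) ((hSm i).nullMeasurableSet) (measure_ne_top P _),
          hmed i, hPS, tsub_self]
    have hnull2 : ∀ i, (∑ j, X i j * b j) ≤ 0 → P (S i \ {ω | 0 ≤ U i ω}) = 0 := by
      intro i hc
      by_cases ha : 0 ≤ (∑ j, X i j * β j)
      · have hP1 : (1:ℝ≥0∞)/2 ≤ P (S i) := by
          have h := measure_mono (μ := P) (hsub1 i ha); rw [hmed i] at h; exact h
        have hP2 : P (S i) ≤ 1/2 := aux_le_half prob_le_one (pw2 i hc)
        have hPS : P (S i) = 1/2 := le_antisymm hP2 hP1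
        rw [measure_diff (hsub1 i ha) ((hUSm i).nullMeasurableSet) (measure_ne_top P _),
          hmed i, hPS, tsub_self]
      · push_neg at ha
        have hempty : S i \ {ω | 0 ≤ U i ω} = ∅ :=
          Set.eq_empty_iff_forall_notMem.mpr fun ω hω => hω.2 (hsub2 i ha.le hω.1)
        rw [hempty]; exact measure_empty
    refine ⟨Y, Ut, hYm, hUtm, ?_, rfl, ?_, ?_⟩
    · -- a.s. representation
      intro i
      have habs := abs_nonneg (∑ j, X i j * b j)
      have habs2 := le_abs_self (∑ j, X i j * b j)
      have habs3 := neg_abs_le (∑ j, X i j * b j)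
      rcases lt_trichotomy (∑ j, X i j * b j) 0 with hc | hc | hc
      · have h0 : ∀ᵐ ω ∂P, ω ∉ S i \ {ω | 0 ≤ U i ω} :=
          measure_eq_zero_iff_ae_notMem.mp (hnull2 i hc.le)
        filter_upwards [h0] with ω hω
        rw [hY i ω]
        simp only [hS, Set.mem_diff, Set.mem_setOf_eq, not_and, not_not] at hω
        by_cases h2 : 0 ≤ (∑ j, X i j * β j) + U i ω
        · have h1 : 0 ≤ U i ω := hω h2
          rw [if_pos h2]
          simp only [hUt, if_pos h1, if_pos h2]
          rw [if_pos (by linarith)]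
        · rw [if_neg h2]
          by_cases h1 : 0 ≤ U i ω
          · simp only [hUt, if_pos h1, if_neg h2, if_pos hc]
            rw [if_neg (by push_neg; linarith)]
          · simp only [hUt, if_neg h1, if_neg h2]
            rw [if_neg (by push_neg; linarith)]
      · have h01 : ∀ᵐ ω ∂P, ω ∉ {ω | 0 ≤ U i ω} \ S i :=
          measure_eq_zero_iff_ae_notMem.mp (hnull1 i hc.ge)
        have h02 : ∀ᵐ ω ∂P, ω ∉ S i \ {ω | 0 ≤ U i ω} :=
          measure_eq_zero_iff_ae_notMem.mp (hnull2 i hc.le)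
        filter_upwards [h01, h02] with ω hω1 hω2
        rw [hY i ω]
        simp only [hS, Set.mem_diff, Set.mem_setOf_eq, not_and, not_not] at hω1 hω2
        by_cases h2 : 0 ≤ (∑ j, X i j * β j) + U i ω
        · have h1 : 0 ≤ U i ω := hω2 h2
          rw [if_pos h2]
          simp only [hUt, if_pos h1, if_pos h2]
          rw [if_pos (by linarith)]
        · have h1 : ¬ 0 ≤ U i ω := fun h => h2 (hω1 h)
          rw [if_neg h2]
          simp only [hUt, if_neg h1, if_neg h2]
          rw [if_neg (by push_neg; linarith)]
      · have h01 : ∀ᵐ ω ∂P, ω ∉ {ω | 0 ≤ U i ω} \ S i :=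
          measure_eq_zero_iff_ae_notMem.mp (hnull1 i hc.le)
        filter_upwards [h01] with ω hω
        rw [hY i ω]
        simp only [hS, Set.mem_diff, Set.mem_setOf_eq, not_and, not_not] at hω
        by_cases h1 : 0 ≤ U i ω
        · have h2 : 0 ≤ (∑ j, X i j * β j) + U i ω := hω h1
          rw [if_pos h2]
          simp only [hUt, if_pos h1, if_pos h2]
          rw [if_pos (by linarith)]
        · by_cases h2 : 0 ≤ (∑ j, X i j * β j) + U i ω
          · rw [if_pos h2]
            simp only [hUt, if_neg h1, if_pos h2, if_pos hc]
            rw [if_pos (by linarith)]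
          · rw [if_neg h2]
            simp only [hUt, if_neg h1, if_neg h2]
            rw [if_neg (by push_neg; linarith)]
    · -- median condition
      intro i
      have : {ω | 0 ≤ Ut i ω} = {ω | 0 ≤ U i ω} := Set.ext fun ω => hsign i ω
      rw [this]; exact hmed i
    · -- independence
      have heq : (fun (i : Fin n) (ω : Ω) => if 0 ≤ Ut i ω then (1:ℝ) else 0)
          = fun i ω => if 0 ≤ U i ω then 1 else 0 := by
        funext i ω
        by_cases h : 0 ≤ U i ω
        · rw [if_pos ((hsign i ω).mpr h), if_pos h]
        · rw [if_neg (fun hh => h ((hsign i ω).mp hh)), if_neg h]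
      rw [heq]; exact hindep
end

section
/- (Key step in the proof of Theorem 2 of the paper.) Under Assumption 1, suppose b ∈ ℝ^K satisfies E[n^{-1} Σ_{i=1}^n (2Y_i − 1)·1{X_i b ≥ 0}·1{X_i β < 0}] ≥ 0 and E[n^{-1} Σ_{i=1}^n (1 − 2Y_i)·1{X_i b ≤ 0}·1{X_i β > 0}] ≥ 0. Then for every i = 1, …, n: E[2Y_i − 1]·1{X_i b ≥ 0 and X_i β < 0} = 0 and E[2Y_i − 1]·1{X_i b ≤ 0 and X_i β > 0} = 0. -/
open MeasureTheory ProbabilityTheory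

lemma key_lemma {Ω : Type*} [MeasurableSpace Ω] (P : Measure Ω) [IsProbabilityMeasure P]
    {n : ℕ} (hn : 1 ≤ n) (t : Fin n → Ω → ℝ) (a : Fin n → ℝ)
    (hint : ∀ i, Integrable (t i) P)
    (hle : ∀ i, (∫ ω, t i ω ∂P) * a i ≤ 0)
    (h : 0 ≤ ∫ ω, (n : ℝ)⁻¹ * ∑ i, t i ω * a i ∂P) :
    ∀ i, (∫ ω, t i ω ∂P) * a i = 0 := by
  have hcomp : (∫ ω, (n : ℝ)⁻¹ * ∑ i, t i ω * a i ∂P)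
      = (n : ℝ)⁻¹ * ∑ i, (∫ ω, t i ω ∂P) * a i := by
    rw [integral_const_mul, integral_finset_sum _ (fun i _ => (hint i).mul_const (a i))]
    simp [integral_mul_const]
  rw [hcomp] at h
  have hnpos : (0:ℝ) < (n : ℝ)⁻¹ := by positivity
  have hsum : 0 ≤ ∑ i, (∫ ω, t i ω ∂P) * a i := nonneg_of_mul_nonneg_right h hnpos
  have hsum0 : ∑ i, (∫ ω, t i ω ∂P) * a i = 0 :=
    le_antisymm (Finset.sum_nonpos (fun i _ => hle i)) hsum
  intro i
  exact (Finset.sum_eq_zero_iff_of_nonpos (fun i _ => hle i)).mp hsum0 i (Finset.mem_univ i)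

lemma expY_eq {Ω : Type*} [MeasurableSpace Ω] (P : Measure Ω) [IsProbabilityMeasure P]
    {f : Ω → ℝ} (hf : Measurable f) (c : ℝ) :
    Integrable (fun ω => if 0 ≤ c + f ω then (1:ℝ) else 0) P ∧
    ∫ ω, (if 0 ≤ c + f ω then (1:ℝ) else 0) ∂P = (P {ω | 0 ≤ c + f ω}).toReal := by
  have hs : MeasurableSet {ω | 0 ≤ c + f ω} := by
    have : Measurable fun ω => c + f ω := measurable_const.add hf
    exact measurableSet_le measurable_const this
  have heq : (fun ω => if 0 ≤ c + f ω then (1:ℝ) else 0)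
      = Set.indicator {ω | 0 ≤ c + f ω} (fun _ => (1:ℝ)) := by
    funext ω; simp [Set.indicator_apply, Set.mem_setOf_eq]
  constructor
  · rw [heq]; exact (integrable_const 1).indicator hs
  · rw [heq, integral_indicator_const _ hs]; simp; rfl

/-- Key step in the proof of Theorem 2: if the two aggregated moment inequalities
(with `v = β`) hold, then for every `i` the (deterministic-indicator weighted)
expectations vanish. -/
theorem theorem2_key_step
    {Ω : Type*} [MeasurableSpace Ω] (P : Measure Ω) [IsProbabilityMeasure P]
    {n K : ℕ} (hn : 1 ≤ n) (hK : 1 ≤ K)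
    (X : Fin n → Fin K → ℝ) (β : Fin K → ℝ)
    (U : Fin n → Ω → ℝ) (hU : ∀ i, Measurable (U i))
    (Y : Fin n → Ω → ℝ)
    (hY : ∀ i ω, Y i ω = if 0 ≤ (∑ j, X i j * β j) + U i ω then 1 else 0)
    (hmed : ∀ i, P {ω | 0 ≤ U i ω} = 1/2)
    (hindep : iIndepFun
      (fun i ω => if 0 ≤ U i ω then (1 : ℝ) else 0) P)
    (b : Fin K → ℝ)
    (hmomu : 0 ≤ (∫ ω, (n : ℝ)⁻¹ * ∑ i, (2 * Y i ω - 1) *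
      (if 0 ≤ (∑ j, X i j * b j) then 1 else 0) *
      (if (∑ j, X i j * β j) < 0 then 1 else 0) ∂P))
    (hmoml : 0 ≤ (∫ ω, (n : ℝ)⁻¹ * ∑ i, (1 - 2 * Y i ω) *
      (if (∑ j, X i j * b j) ≤ 0 then 1 else 0) *
      (if 0 < (∑ j, X i j * β j) then 1 else 0) ∂P)) :
    ∀ i : Fin n,
      (∫ ω, (2 * Y i ω - 1) ∂P) *
        (if 0 ≤ (∑ j, X i j * b j) ∧ (∑ j, X i j * β j) < 0 then 1 else 0) = 0 ∧
      (∫ ω, (2 * Y i ω - 1) ∂P) *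
        (if (∑ j, X i j * b j) ≤ 0 ∧ 0 < (∑ j, X i j * β j) then 1 else 0) = 0 := by
  set c : Fin n → ℝ := fun i => ∑ j, X i j * β j with hc
  set e : Fin n → ℝ := fun i => ∑ j, X i j * b j with he
  -- integrability and value of ∫ Y i
  have hYfun : ∀ i, Y i = fun ω => if 0 ≤ c i + U i ω then (1:ℝ) else 0 := by
    intro i; funext ω; exact hY i ω
  have hYint : ∀ i, Integrable (Y i) P := by
    intro i; rw [hYfun i]; exact (expY_eq P (hU i) (c i)).1
  have hYval : ∀ i, ∫ ω, Y i ω ∂P = (P {ω | 0 ≤ c i + U i ω}).toReal := by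
    intro i; rw [hYfun i]; exact (expY_eq P (hU i) (c i)).2
  have htint : ∀ i, Integrable (fun ω => 2 * Y i ω - 1) P := by
    intro i; exact ((hYint i).const_mul 2).sub (integrable_const 1)
  have hm : ∀ i, ∫ ω, (2 * Y i ω - 1) ∂P
      = 2 * (P {ω | 0 ≤ c i + U i ω}).toReal - 1 := by
    intro i
    rw [integral_sub ((hYint i).const_mul 2) (integrable_const 1),
      integral_const_mul, hYval i]
    simp
  have hfin : ∀ i, P {ω | 0 ≤ c i + U i ω} ≠ ⊤ := fun i => measure_ne_top P _
  -- if c i < 0 then E[2Y-1] ≤ 0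
  have hneg : ∀ i, c i < 0 → ∫ ω, (2 * Y i ω - 1) ∂P ≤ 0 := by
    intro i hci
    have hsub : {ω | 0 ≤ c i + U i ω} ⊆ {ω | 0 ≤ U i ω} := by
      intro ω hω; simp only [Set.mem_setOf_eq] at *; linarith
    have := measure_mono (μ := P) hsub
    rw [hmed i] at this
    have h2 : (P {ω | 0 ≤ c i + U i ω}).toReal ≤ ((1:ENNReal)/2).toReal :=
      ENNReal.toReal_mono (by simp) this
    rw [hm i]
    have : ((1:ENNReal)/2).toReal = 1/2 := by simp
    rw [this] at h2; linarith
  -- if 0 < c i then E[2Y-1] ≥ 0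
  have hpos : ∀ i, 0 < c i → 0 ≤ ∫ ω, (2 * Y i ω - 1) ∂P := by
    intro i hci
    have hsub : {ω | 0 ≤ U i ω} ⊆ {ω | 0 ≤ c i + U i ω} := by
      intro ω hω; simp only [Set.mem_setOf_eq] at *; linarith
    have hmes := measure_mono (μ := P) hsub
    rw [hmed i] at hmes
    have h2 : ((1:ENNReal)/2).toReal ≤ (P {ω | 0 ≤ c i + U i ω}).toReal :=
      ENNReal.toReal_mono (hfin i) hmes
    rw [hm i]
    have : ((1:ENNReal)/2).toReal = 1/2 := by simp
    rw [this] at h2; linarith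
  -- first family
  have key1 : ∀ i, (∫ ω, (2 * Y i ω - 1) ∂P) *
      ((if 0 ≤ e i then (1:ℝ) else 0) * (if c i < 0 then (1:ℝ) else 0)) = 0 := by
    apply key_lemma P hn (fun i ω => 2 * Y i ω - 1) _ htint
    · intro i
      by_cases hci : c i < 0
      · have h1 : (0:ℝ) ≤ (if 0 ≤ e i then (1:ℝ) else 0) * (if c i < 0 then (1:ℝ) else 0) := by
          positivity
        exact mul_nonpos_of_nonpos_of_nonneg (hneg i hci) h1
      · simp [hci]
    · have : (fun ω => (n : ℝ)⁻¹ * ∑ i, (2 * Y i ω - 1) *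
          ((if 0 ≤ e i then (1:ℝ) else 0) * (if c i < 0 then (1:ℝ) else 0)))
          = fun ω => (n : ℝ)⁻¹ * ∑ i, (2 * Y i ω - 1) *
          (if 0 ≤ e i then (1:ℝ) else 0) * (if c i < 0 then (1:ℝ) else 0) := by
        funext ω; congr 1; exact Finset.sum_congr rfl (fun i _ => by ring)
      rw [this]; exact hmomu
  -- second family
  have key2 : ∀ i, (∫ ω, (1 - 2 * Y i ω) ∂P) *
      ((if e i ≤ 0 then (1:ℝ) else 0) * (if 0 < c i then (1:ℝ) else 0)) = 0 := by
    apply key_lemma P hn (fun i ω => 1 - 2 * Y i ω) _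
      (fun i => (integrable_const 1).sub ((hYint i).const_mul 2))
    · intro i
      by_cases hci : 0 < c i
      · have h1 : (0:ℝ) ≤ (if e i ≤ 0 then (1:ℝ) else 0) * (if 0 < c i then (1:ℝ) else 0) := by
          positivity
        have h2 : ∫ ω, (1 - 2 * Y i ω) ∂P ≤ 0 := by
          have := hpos i hci
          have heq : ∫ ω, (1 - 2 * Y i ω) ∂P = - ∫ ω, (2 * Y i ω - 1) ∂P := by
            rw [← integral_neg]; congr 1; funext ω; ring
          rw [heq]; linarith
        exact mul_nonpos_of_nonpos_of_nonneg h2 h1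
      · simp [hci]
    · have : (fun ω => (n : ℝ)⁻¹ * ∑ i, (1 - 2 * Y i ω) *
          ((if e i ≤ 0 then (1:ℝ) else 0) * (if 0 < c i then (1:ℝ) else 0)))
          = fun ω => (n : ℝ)⁻¹ * ∑ i, (1 - 2 * Y i ω) *
          (if e i ≤ 0 then (1:ℝ) else 0) * (if 0 < c i then (1:ℝ) else 0) := by
        funext ω; congr 1; exact Finset.sum_congr rfl (fun i _ => by ring)
      rw [this]; exact hmoml
  intro i
  constructor
  · have := key1 i
    have hif : (if 0 ≤ e i ∧ c i < 0 then (1:ℝ) else 0)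
        = (if 0 ≤ e i then (1:ℝ) else 0) * (if c i < 0 then (1:ℝ) else 0) := by
      by_cases h1 : 0 ≤ e i <;> by_cases h2 : c i < 0 <;> simp [h1, h2]
    rw [hif]; exact this
  · have := key2 i
    have heq2 : ∫ ω, (1 - 2 * Y i ω) ∂P = - ∫ ω, (2 * Y i ω - 1) ∂P := by
      rw [← integral_neg]; congr 1; funext ω; ring
    rw [heq2] at this
    have hif : (if e i ≤ 0 ∧ 0 < c i then (1:ℝ) else 0)
        = (if e i ≤ 0 then (1:ℝ) else 0) * (if 0 < c i then (1:ℝ) else 0) := by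
      by_cases h1 : e i ≤ 0 <;> by_cases h2 : 0 < c i <;> simp [h1, h2]
    rw [hif]
    have := neg_eq_zero.mp (by linarith [this] : -((∫ ω, (2 * Y i ω - 1) ∂P) *
      ((if e i ≤ 0 then (1:ℝ) else 0) * (if 0 < c i then (1:ℝ) else 0))) = 0)
    linarith [this]
end

section
/- (Corollary 2, part 2, of the paper.) Under Assumptions 1 and 2, for any b ∈ ℝ^K not in the finite sample identified set B*_n, the rejection probability satisfies ℙ(T_n(b) > q_{1−α}) ≥ 1 − exp( −(1/2)·( max{0, √n·Q(b) − q_{1−α}·max{ε, (1 + q_{1−α}²/n)^{−1/2}}} )² ). -/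
open MeasureTheory ProbabilityTheory

/-- Sample upper moment `m̂_u(b,v)` computed from outcomes `y`. -/
noncomputable def muHatU {n K : ℕ} (X : Fin n → Fin K → ℝ) (b v : Fin K → ℝ)
    (y : Fin n → ℝ) : ℝ :=
  (n : ℝ)⁻¹ * ∑ i, (2 * y i - 1) *
    (if 0 ≤ (∑ j, X i j * b j) ∧ (∑ j, X i j * v j) < 0 then 1 else 0)

/-- Sample lower moment `m̂_l(b,v)` computed from outcomes `y`. -/
noncomputable def muHatL {n K : ℕ} (X : Fin n → Fin K → ℝ) (b v : Fin K → ℝ)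
    (y : Fin n → ℝ) : ℝ :=
  (n : ℝ)⁻¹ * ∑ i, (1 - 2 * y i) *
    (if (∑ j, X i j * b j) ≤ 0 ∧ 0 < (∑ j, X i j * v j) then 1 else 0)

/-- Sample variance `σ̂_u²(b,v)`. -/
noncomputable def sigHatU2 {n K : ℕ} (X : Fin n → Fin K → ℝ) (b v : Fin K → ℝ)
    (y : Fin n → ℝ) : ℝ :=
  (n : ℝ)⁻¹ * (∑ i, (if 0 ≤ (∑ j, X i j * b j) ∧ (∑ j, X i j * v j) < 0
      then (1:ℝ) else 0)) - (muHatU X b v y) ^ 2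

/-- Sample variance `σ̂_l²(b,v)`. -/
noncomputable def sigHatL2 {n K : ℕ} (X : Fin n → Fin K → ℝ) (b v : Fin K → ℝ)
    (y : Fin n → ℝ) : ℝ :=
  (n : ℝ)⁻¹ * (∑ i, (if (∑ j, X i j * b j) ≤ 0 ∧ 0 < (∑ j, X i j * v j)
      then (1:ℝ) else 0)) - (muHatL X b v y) ^ 2

/-- The test statistic `T_n(b)` computed from outcomes `y`. -/
noncomputable def Tstat {n K : ℕ} (X : Fin n → Fin K → ℝ)
    (Vu Vl : Finset (Fin K → ℝ)) (hu : Vu.Nonempty) (hl : Vl.Nonempty)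
    (ε : ℝ) (b : Fin K → ℝ) (y : Fin n → ℝ) : ℝ :=
  max 0 (max
    (Vu.sup' hu fun v =>
      Real.sqrt n * (-(muHatU X b v y)) /
        max (Real.sqrt (sigHatU2 X b v y)) ε)
    (Vl.sup' hl fun v =>
      Real.sqrt n * (-(muHatL X b v y)) /
        max (Real.sqrt (sigHatL2 X b v y)) ε))

open scoped Classical

section AuxHoeffding

-- Hoeffding's lemma, log form
lemma hoeff_log {p : ℝ} (hp0 : 0 ≤ p) (hp1 : p ≤ 1) {t : ℝ} (ht : 0 ≤ t) :
    Real.log (1 - p + p * Real.exp t) ≤ p * t + t ^ 2 / 8 := by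
  set g : ℝ → ℝ := fun s => 1 - p + p * Real.exp s with hgdef
  have hg : ∀ s, 0 < g s := by
    intro s
    rcases lt_or_ge p 1 with h | h
    · have := mul_nonneg hp0 (Real.exp_pos s).le
      simp only [hgdef]; linarith
    · have hp : p = 1 := le_antisymm hp1 h
      simp only [hgdef, hp]; have := Real.exp_pos s; linarith
  have hg' : ∀ s, HasDerivAt g (p * Real.exp s) s := by
    intro s
    exact ((Real.hasDerivAt_exp s).const_mul p).const_add (1 - p)
  -- h1 = derivative of h
  set h1 : ℝ → ℝ := fun s => p + s / 4 - p * Real.exp s / g s with hh1def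
  have hh1deriv : ∀ s, HasDerivAt h1
      (1 / 4 - (p * Real.exp s * g s - p * Real.exp s * (p * Real.exp s)) / (g s) ^ 2) s := by
    intro s
    have hdiv : HasDerivAt (fun s => p * Real.exp s / g s)
        ((p * Real.exp s * g s - p * Real.exp s * (p * Real.exp s)) / (g s) ^ 2) s :=
      ((Real.hasDerivAt_exp s).const_mul p).div (hg' s) (hg s).ne'
    have hlin : HasDerivAt (fun s => p + s / 4) (1 / 4) s := by
      simpa using ((hasDerivAt_id s).div_const 4).const_add p
    exact hlin.sub hdiv
  have hderiv_nonneg : ∀ s, 0 ≤ 1 / 4 -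
      (p * Real.exp s * g s - p * Real.exp s * (p * Real.exp s)) / (g s) ^ 2 := by
    intro s
    rw [sub_nonneg, div_le_iff₀ (pow_pos (hg s) 2)]
    have hE := (Real.exp_pos s).le
    nlinarith [sq_nonneg ((1 - p) - p * Real.exp s), mul_nonneg hp0 hE]
  have h1mono : Monotone h1 :=
    monotone_of_deriv_nonneg (fun s => (hh1deriv s).differentiableAt)
      (fun s => by rw [(hh1deriv s).deriv]; exact hderiv_nonneg s)
  have h1zero : h1 0 = 0 := by simp [hh1def, hgdef]
  have h1nonneg : ∀ s, 0 ≤ s → 0 ≤ h1 s := fun s hs => h1zero ▸ h1mono hs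
  -- h
  set h : ℝ → ℝ := fun s => p * s + s ^ 2 / 8 - Real.log (g s) with hhdef
  have hhderiv : ∀ s, HasDerivAt h (h1 s) s := by
    intro s
    have hlog : HasDerivAt (fun s => Real.log (g s)) (p * Real.exp s / g s) s :=
      (hg' s).log (hg s).ne'
    have hpoly : HasDerivAt (fun s => p * s + s ^ 2 / 8) (p + s / 4) s := by
      have h2 : HasDerivAt (fun s : ℝ => s ^ 2 / 8) (s / 4) s := by
        have := (hasDerivAt_pow 2 s).div_const 8
        exact this.congr_deriv (by norm_num; ring)
      have h3 := ((hasDerivAt_id s).const_mul p).add h2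
      simp only [mul_one] at h3
      exact h3
    exact hpoly.sub hlog
  have hmono : MonotoneOn h (Set.Ici (0 : ℝ)) := by
    apply monotoneOn_of_deriv_nonneg (convex_Ici 0)
    · exact fun s _ => (hhderiv s).continuousAt.continuousWithinAt
    · exact fun s _ => (hhderiv s).differentiableAt.differentiableWithinAt
    · intro s hs
      rw [(hhderiv s).deriv]
      exact h1nonneg s (le_of_lt (by simpa using hs))
  have h0 : h 0 = 0 := by simp [hhdef, hgdef]
  have := hmono (Set.self_mem_Ici) (Set.mem_Ici.mpr ht) ht
  rw [h0] at this
  simp only [hhdef] at this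
  linarith

-- Hoeffding's lemma for a two-point distribution on {-1, 1}
lemma hoeff_lemma {p : ℝ} (hp0 : 0 ≤ p) (hp1 : p ≤ 1) (l : ℝ) :
    p * Real.exp l + (1 - p) * Real.exp (-l) ≤ Real.exp ((2 * p - 1) * l + l ^ 2 / 2) := by
  have key : ∀ p l : ℝ, 0 ≤ p → p ≤ 1 → 0 ≤ l →
      p * Real.exp l + (1 - p) * Real.exp (-l) ≤ Real.exp ((2 * p - 1) * l + l ^ 2 / 2) := by
    intro p l hp0 hp1 hl
    have hg : (0:ℝ) < 1 - p + p * Real.exp (2 * l) := by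
      rcases lt_or_ge p 1 with h | h
      · have := mul_nonneg hp0 (Real.exp_pos (2*l)).le; linarith
      · have hp : p = 1 := le_antisymm hp1 h
        simp [hp]; exact Real.exp_pos _
    have hlog := hoeff_log hp0 hp1 (by linarith : (0:ℝ) ≤ 2 * l)
    have hge : 1 - p + p * Real.exp (2 * l) ≤ Real.exp (p * (2 * l) + (2 * l) ^ 2 / 8) := by
      rw [← Real.exp_log hg]; exact Real.exp_le_exp.mpr hlog
    have heq : p * Real.exp l + (1 - p) * Real.exp (-l)
        = Real.exp (-l) * (1 - p + p * Real.exp (2 * l)) := by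
      rw [mul_add]
      have : Real.exp (-l) * (p * Real.exp (2*l)) = p * Real.exp l := by
        rw [mul_comm (Real.exp (-l)), mul_assoc, ← Real.exp_add]; ring_nf
      rw [this]; ring
    rw [heq]
    calc Real.exp (-l) * (1 - p + p * Real.exp (2 * l))
        ≤ Real.exp (-l) * Real.exp (p * (2 * l) + (2 * l) ^ 2 / 8) := by
          exact mul_le_mul_of_nonneg_left hge (Real.exp_pos _).le
      _ = Real.exp ((2 * p - 1) * l + l ^ 2 / 2) := by
          rw [← Real.exp_add]; ring_nf
  rcases le_or_gt 0 l with hl | hl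
  · exact key p l hp0 hp1 hl
  · have := key (1 - p) (-l) (by linarith) (by linarith) (by linarith)
    simp only [neg_neg, sub_sub_cancel] at this
    calc p * Real.exp l + (1 - p) * Real.exp (-l)
        = (1 - p) * Real.exp (-l) + (1 - (1 - p)) * Real.exp (-(-l)) := by ring_nf
      _ ≤ Real.exp ((2 * (1 - p) - 1) * (-l) + (-l) ^ 2 / 2) := by
          simpa using this
      _ = Real.exp ((2 * p - 1) * l + l ^ 2 / 2) := by ring_nf


variable {Ω : Type*} [MeasurableSpace Ω] (P : Measure Ω) [IsProbabilityMeasure P]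

lemma integrable_two_point {A : Set Ω} (hA : MeasurableSet A) (c d : ℝ) :
    Integrable (fun ω => if ω ∈ A then c else d) P := by
  have hm : Measurable (fun ω => if ω ∈ A then c else d) :=
    Measurable.ite hA measurable_const measurable_const
  refine (integrable_const (max |c| |d|)).mono' hm.aestronglyMeasurable ?_
  filter_upwards with ω
  by_cases h : ω ∈ A <;> simp only [h, if_true, if_false, Real.norm_eq_abs]
  · exact le_max_left _ _
  · exact le_max_right _ _

lemma integral_two_point {A : Set Ω} (hA : MeasurableSet A) (c d : ℝ) :
    ∫ ω, (if ω ∈ A then c else d) ∂P = c * (P A).toReal + d * (1 - (P A).toReal) := by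
  have heq : (fun ω => if ω ∈ A then c else d)
      = fun ω => A.indicator (fun _ => c - d) ω + d := by
    funext ω; by_cases h : ω ∈ A <;> simp [h, Set.indicator_of_mem, Set.indicator_of_notMem]
  rw [heq, integral_add ((integrable_const (c - d)).indicator hA) (integrable_const d),
    integral_indicator_const _ hA, integral_const]
  simp [smul_eq_mul, measureReal_def]
  ring

lemma mgf_two_point {W : Ω → ℝ} {A : Set Ω} (hA : MeasurableSet A) {c : ℝ}
    (hc : c = 0 ∨ c = 1) (hW : ∀ ω, W ω = if ω ∈ A then c else -c) (t : ℝ) :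
    mgf W P t ≤ Real.exp (t * (∫ ω, W ω ∂P) + t ^ 2 / 2) := by
  set p := (P A).toReal with hp
  have hp0 : 0 ≤ p := ENNReal.toReal_nonneg
  have hp1 : p ≤ 1 := by
    rw [hp]
    exact ENNReal.toReal_le_of_le_ofReal one_pos.le (by simpa using prob_le_one)
  have hWint : ∫ ω, W ω ∂P = c * (2 * p - 1) := by
    calc ∫ ω, W ω ∂P = ∫ ω, (if ω ∈ A then c else -c) ∂P := by
          congr 1; funext ω; exact hW ω
      _ = c * p + (-c) * (1 - p) := integral_two_point P hA c (-c)
      _ = c * (2 * p - 1) := by ring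
  have hmgf : mgf W P t = p * Real.exp (t * c) + (1 - p) * Real.exp (-(t * c)) := by
    unfold mgf
    calc ∫ ω, Real.exp (t * W ω) ∂P
        = ∫ ω, (if ω ∈ A then Real.exp (t * c) else Real.exp (-(t * c))) ∂P := by
          congr 1; funext ω; rw [hW ω]; by_cases h : ω ∈ A <;> simp [h, mul_neg]
      _ = Real.exp (t * c) * p + Real.exp (-(t * c)) * (1 - p) :=
          integral_two_point P hA _ _
      _ = p * Real.exp (t * c) + (1 - p) * Real.exp (-(t * c)) := by ring
  rw [hmgf, hWint]
  calc p * Real.exp (t * c) + (1 - p) * Real.exp (-(t * c))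
      ≤ Real.exp ((2 * p - 1) * (t * c) + (t * c) ^ 2 / 2) := hoeff_lemma hp0 hp1 _
    _ ≤ Real.exp (t * (c * (2 * p - 1)) + t ^ 2 / 2) := by
        apply Real.exp_le_exp.mpr
        have hc2 : c ^ 2 ≤ 1 := by rcases hc with h | h <;> simp [h]
        have : (t * c) ^ 2 ≤ t ^ 2 := by
          calc (t * c) ^ 2 = t ^ 2 * c ^ 2 := by ring
            _ ≤ t ^ 2 * 1 := by nlinarith [sq_nonneg t]
            _ = t ^ 2 := mul_one _
        nlinarith


/-- Hoeffding-type concentration for sums of independent two-point variables. -/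
lemma key_hoeffding {n : ℕ} (hn : 1 ≤ n) (U : Fin n → Ω → ℝ) (hU : ∀ i, Measurable (U i))
    (hindepU : iIndepFun U P)
    (c : Fin n → ℝ) (hc : ∀ i, c i = 0 ∨ c i = 1)
    (B : Fin n → Set ℝ) (hB : ∀ i, MeasurableSet (B i))
    (x : ℝ) (hx : 0 ≤ x) :
    (P {ω | (∫ ω', (∑ i, (if U i ω' ∈ B i then c i else -(c i))) ∂P) + Real.sqrt n * x
        ≤ ∑ i, (if U i ω ∈ B i then c i else -(c i))}).toReal ≤ Real.exp (-(x ^ 2) / 2) := by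
  set Z : Fin n → Ω → ℝ := fun i ω => if U i ω ∈ B i then c i else -(c i) with hZdef
  have hnpos : (0:ℝ) < n := by exact_mod_cast hn
  have hsqrt : (0:ℝ) < Real.sqrt n := Real.sqrt_pos.mpr hnpos
  -- measurability
  have hZmeas : ∀ i, Measurable (Z i) := fun i =>
    by simp only [hZdef]; exact Measurable.ite ((hB i).preimage (hU i)) measurable_const measurable_const
  -- independence
  have hZindep : iIndepFun Z P := by
    have := hindepU.comp (fun i u => if u ∈ B i then c i else -(c i))
      (fun i => Measurable.ite (hB i) measurable_const measurable_const)
    exact this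
  -- bound on |Z i|
  have hZbd : ∀ i ω, |Z i ω| ≤ 1 := by
    intro i ω
    have : |c i| ≤ 1 := by rcases hc i with h | h <;> simp [h]
    simp only [hZdef]
    by_cases h : U i ω ∈ B i <;> simp [h, abs_neg, this]
  -- integrability of Z i
  have hZint : ∀ i, Integrable (Z i) P := by
    intro i
    have := integrable_two_point P ((hB i).preimage (hU i)) (c i) (-(c i))
    simpa [hZdef, Set.preimage, Set.mem_setOf_eq] using this
  set S : Ω → ℝ := fun ω => ∑ i, Z i ω with hSdef
  have hSsum : S = ∑ i, Z i := by funext ω; simp [hSdef, Finset.sum_apply]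
  have hSint : ∫ ω, S ω ∂P = ∑ i, ∫ ω, Z i ω ∂P := integral_finset_sum _ (fun i _ => hZint i)
  set t : ℝ := x / Real.sqrt n with htdef
  have ht : 0 ≤ t := div_nonneg hx hsqrt.le
  -- integrability of exp (t * Z i)
  have hexpint : ∀ i, Integrable (fun ω => Real.exp (t * Z i ω)) P := by
    intro i
    refine (integrable_const (Real.exp |t|)).mono'
      ((Real.measurable_exp.comp ((hZmeas i).const_mul t)).aestronglyMeasurable) ?_
    filter_upwards with ω
    rw [Real.norm_eq_abs, abs_of_pos (Real.exp_pos _)]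
    apply Real.exp_le_exp.mpr
    calc t * Z i ω ≤ |t * Z i ω| := le_abs_self _
      _ = |t| * |Z i ω| := abs_mul _ _
      _ ≤ |t| * 1 := by nlinarith [abs_nonneg t, hZbd i ω]
      _ = |t| := mul_one _
  -- integrability of exp (t * S)
  have hexpintS : Integrable (fun ω => Real.exp (t * S ω)) P := by
    refine (integrable_const (Real.exp (|t| * n))).mono'
      ((Real.measurable_exp.comp ((Finset.measurable_sum _ fun i _ => hZmeas i).const_mul t)).aestronglyMeasurable) ?_
    filter_upwards with ω
    rw [Real.norm_eq_abs, abs_of_pos (Real.exp_pos _)]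
    apply Real.exp_le_exp.mpr
    have hSbd : |S ω| ≤ n := by
      calc |S ω| ≤ ∑ i, |Z i ω| := Finset.abs_sum_le_sum_abs _ _
        _ ≤ ∑ _i : Fin n, (1:ℝ) := Finset.sum_le_sum (fun i _ => hZbd i ω)
        _ = n := by simp
    calc t * S ω ≤ |t * S ω| := le_abs_self _
      _ = |t| * |S ω| := abs_mul _ _
      _ ≤ |t| * n := by nlinarith [abs_nonneg t]
  -- Chernoff bound
  have hchern := measure_ge_le_exp_mul_mgf (μ := P) (X := S)
    ((∫ ω', S ω' ∂P) + Real.sqrt n * x) ht hexpintS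
  -- mgf product bound
  have hmgf : mgf S P t ≤ Real.exp (t * (∫ ω', S ω' ∂P) + n * t ^ 2 / 2) := by
    have hmgfeq : mgf S P t = ∏ i, mgf (Z i) P t := by rw [hSsum]; exact hZindep.mgf_sum hZmeas Finset.univ
    rw [hmgfeq]
    calc ∏ i, mgf (Z i) P t
        ≤ ∏ i, Real.exp (t * (∫ ω, Z i ω ∂P) + t ^ 2 / 2) := by
          apply Finset.prod_le_prod (fun i _ => mgf_nonneg)
          intro i _
          exact mgf_two_point P ((hB i).preimage (hU i)) (hc i)
            (fun ω => by simp [hZdef, Set.preimage, Set.mem_setOf_eq]) t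
      _ = Real.exp (∑ i : Fin n, (t * (∫ ω, Z i ω ∂P) + t ^ 2 / 2)) := (Real.exp_sum _ _).symm
      _ = Real.exp (t * (∫ ω', S ω' ∂P) + n * t ^ 2 / 2) := by
          rw [hSint]
          congr 1
          rw [Finset.sum_add_distrib, Finset.mul_sum]
          simp [Finset.sum_const, Finset.card_univ]
          ring
  calc (P {ω | (∫ ω', S ω' ∂P) + Real.sqrt n * x ≤ S ω}).toReal
      ≤ Real.exp (-t * ((∫ ω', S ω' ∂P) + Real.sqrt n * x)) * mgf S P t := hchern
    _ ≤ Real.exp (-t * ((∫ ω', S ω' ∂P) + Real.sqrt n * x)) *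
        Real.exp (t * (∫ ω', S ω' ∂P) + n * t ^ 2 / 2) :=
          mul_le_mul_of_nonneg_left hmgf (Real.exp_pos _).le
    _ = Real.exp (-(x ^ 2) / 2) := by
        rw [← Real.exp_add]
        congr 1
        have h1 : t * Real.sqrt n = x := by
          rw [htdef]; field_simp
        have h2 : (n:ℝ) * t ^ 2 = x ^ 2 := by
          rw [htdef, div_pow, Real.sq_sqrt hnpos.le]
          field_simp
        nlinarith [h1, h2]


/-- Arithmetic: if the self-normalized statistic is ≤ q, then m̂ ≥ -qM/√n. -/
lemma arith_incl {n : ℕ} (hn : 1 ≤ n) {q eps m p : ℝ} (hq : 0 ≤ q) (heps : 0 < eps)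
    (hp1 : p ≤ 1) (hm : |m| ≤ p)
    (h : Real.sqrt n * (-m) / max (Real.sqrt (p - m ^ 2)) eps ≤ q) :
    -(q * max eps (Real.sqrt (1 + q ^ 2 / n))⁻¹) / Real.sqrt n ≤ m := by
  set M := max eps (Real.sqrt (1 + q ^ 2 / n))⁻¹ with hM
  have hnpos : (0:ℝ) < n := by exact_mod_cast hn
  have hsn : (0:ℝ) < Real.sqrt n := Real.sqrt_pos.mpr hnpos
  by_contra hcon
  push_neg at hcon
  -- hcon : m < -(q * M) / √n
  have hmneg : 0 < -m := by
    have hMpos : 0 < M := lt_of_lt_of_le heps (le_max_left _ _)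
    have : -(q * M) / Real.sqrt n ≤ 0 := by
      apply div_nonpos_of_nonpos_of_nonneg _ hsn.le
      simp only [neg_nonpos]
      positivity
    nlinarith
  set D := max (Real.sqrt (p - m ^ 2)) eps with hD
  have hDpos : 0 < D := lt_of_lt_of_le heps (le_max_right _ _)
  -- From hcon : √n * (-m) > q * M
  have hkey : q * M < Real.sqrt n * (-m) := by
    have h' := (lt_div_iff₀ hsn).mp hcon
    nlinarith [h']
  -- claim: q * D < √n * (-m), contradiction with h
  have hqe : q * eps ≤ q * M := mul_le_mul_of_nonneg_left (le_max_left _ _) hq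
  have hs_le : q * Real.sqrt (p - m ^ 2) < Real.sqrt n * (-m) := by
    rcases eq_or_lt_of_le hq with hq0 | hqpos
    · rw [← hq0]; simpa using mul_pos hsn hmneg
    -- q > 0 case: m² > q²/(n+q²)
    have hMub : q / Real.sqrt ((n:ℝ) + q ^ 2) ≤ q * M / Real.sqrt n := by
      have h1 : (Real.sqrt (1 + q ^ 2 / n))⁻¹ ≤ M := le_max_right _ _
      have h2 : Real.sqrt n * Real.sqrt (1 + q ^ 2 / n) = Real.sqrt ((n:ℝ) + q ^ 2) := by
        rw [← Real.sqrt_mul hnpos.le]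
        congr 1
        field_simp
      have h3 : 0 < Real.sqrt (1 + q ^ 2 / n) := Real.sqrt_pos.mpr (by positivity)
      rw [div_le_div_iff₀ (by rw [← h2]; positivity) hsn]
      calc q * Real.sqrt n
          = q * (Real.sqrt n * Real.sqrt (1 + q ^ 2 / n)) * (Real.sqrt (1 + q ^ 2 / n))⁻¹ := by
            field_simp
        _ ≤ q * (Real.sqrt n * Real.sqrt (1 + q ^ 2 / n)) * M := by
            apply mul_le_mul_of_nonneg_left h1
            positivity
        _ = q * M * (Real.sqrt n * Real.sqrt (1 + q ^ 2 / n)) := by ring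
        _ = q * M * Real.sqrt ((n:ℝ) + q ^ 2) := by rw [h2]
    have hmgt : q / Real.sqrt ((n:ℝ) + q ^ 2) < -m := by
      have : q * M / Real.sqrt n < -m := by
        rw [div_lt_iff₀ hsn]; nlinarith [hkey]
      linarith [hMub]
    have hsq : 0 < Real.sqrt ((n:ℝ) + q ^ 2) := Real.sqrt_pos.mpr (by positivity)
    have hm2 : q ^ 2 < m ^ 2 * ((n:ℝ) + q ^ 2) := by
      have h4 := (div_lt_iff₀ hsq).mp hmgt
      have h5 : q ^ 2 < (-m) ^ 2 * Real.sqrt ((n:ℝ) + q ^ 2) ^ 2 := by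
        nlinarith [h4, hsq, hmneg]
      rw [Real.sq_sqrt (by positivity : (0:ℝ) ≤ (n:ℝ) + q ^ 2)] at h5
      nlinarith [h5]
    -- so n * m² > q² (1 - m²) ≥ q² (p - m²)
    have h6 : q ^ 2 * (p - m ^ 2) < (n:ℝ) * m ^ 2 := by nlinarith [sq_nonneg q, sq_nonneg m]
    have h7 : Real.sqrt (q ^ 2 * (p - m ^ 2)) < Real.sqrt ((n:ℝ) * m ^ 2) := by
      rcases le_or_gt (p - m ^ 2) 0 with hneg | hpos
      · have hz : Real.sqrt (q ^ 2 * (p - m ^ 2)) = 0 :=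
          Real.sqrt_eq_zero_of_nonpos (mul_nonpos_of_nonneg_of_nonpos (sq_nonneg q) hneg)
        rw [hz]
        apply Real.sqrt_pos.mpr
        have hm2pos : (0:ℝ) < m ^ 2 := by nlinarith
        exact mul_pos hnpos hm2pos
      · exact Real.sqrt_lt_sqrt (mul_nonneg (sq_nonneg q) hpos.le) h6
    have h8 : Real.sqrt (q ^ 2 * (p - m ^ 2)) = q * Real.sqrt (p - m ^ 2) := by
      rw [Real.sqrt_mul (by positivity) , Real.sqrt_sq hq]
      
    have h9 : Real.sqrt ((n:ℝ) * m ^ 2) = Real.sqrt n * (-m) := by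
      rw [Real.sqrt_mul hnpos.le]
      congr 1
      rw [← Real.sqrt_sq hmneg.le]
      congr 1; ring
    rw [h8, h9] at h7
    exact h7
  have hq_lt : q * D < Real.sqrt n * (-m) := by
    rw [hD]
    rcases max_cases (Real.sqrt (p - m ^ 2)) eps with ⟨heq, _⟩ | ⟨heq, _⟩
    · rw [heq]; exact hs_le
    · rw [heq]; exact lt_of_le_of_lt hqe hkey
  have : q < Real.sqrt n * (-m) / D := (lt_div_iff₀ hDpos).mpr (by linarith [hq_lt])
  linarith [h]


lemma measurable_finset_sup' {Ω ι : Type*} [MeasurableSpace Ω] (s : Finset ι) (hs : s.Nonempty)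
    (f : ι → Ω → ℝ) (hf : ∀ i, Measurable (f i)) :
    Measurable (fun ω => s.sup' hs fun i => f i ω) := by
  induction hs using Finset.Nonempty.cons_induction with
  | singleton a => simpa using hf a
  | cons a s ha hs ih =>
      have heq : (fun ω => (Finset.cons a s ha).sup' (Finset.cons_nonempty ha) fun i => f i ω)
          = fun ω => max (f a ω) (s.sup' hs fun i => f i ω) := by
        funext ω
        exact Finset.sup'_cons (f := fun i => f i ω) (b := a) (hb := ha) hs
      rw [heq]
      exact (hf a).max ih


/-- bound |n⁻¹ Σ s_i c_i| ≤ n⁻¹ Σ c_i for |s_i| = 1, c_i ∈ {0,1} -/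
lemma abs_avg_le {n : ℕ} (s c : Fin n → ℝ) (hs : ∀ i, |s i| = 1) (hc : ∀ i, c i = 0 ∨ c i = 1) :
    |(n:ℝ)⁻¹ * ∑ i, s i * c i| ≤ (n:ℝ)⁻¹ * ∑ i, c i := by
  rw [abs_mul, abs_of_nonneg (by positivity : (0:ℝ) ≤ ((n:ℝ))⁻¹)]
  apply mul_le_mul_of_nonneg_left _ (by positivity : (0:ℝ) ≤ ((n:ℝ))⁻¹)
  calc |∑ i, s i * c i| ≤ ∑ i, |s i * c i| := Finset.abs_sum_le_sum_abs _ _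
    _ = ∑ i, c i := by
      apply Finset.sum_congr rfl
      intro i _
      rw [abs_mul, hs i, one_mul]
      rcases hc i with h | h <;> simp [h]

lemma avg_le_one {n : ℕ} (hn : 1 ≤ n) (c : Fin n → ℝ) (hc : ∀ i, c i = 0 ∨ c i = 1) :
    (n:ℝ)⁻¹ * ∑ i, c i ≤ 1 := by
  have hnpos : (0:ℝ) < n := by exact_mod_cast hn
  rw [inv_mul_le_iff₀ hnpos, mul_one]
  calc ∑ i, c i ≤ ∑ _i : Fin n, (1:ℝ) := Finset.sum_le_sum (fun i _ => by rcases hc i with h|h <;> simp [h])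
    _ = n := by simp

/-- Hoeffding bound stated in m̂-scale via an event inclusion. -/
lemma hoeff_event {Ω : Type*} [MeasurableSpace Ω] (P : Measure Ω) [IsProbabilityMeasure P]
    {n : ℕ} (hn : 1 ≤ n) (U : Fin n → Ω → ℝ) (hU : ∀ i, Measurable (U i))
    (hindepU : iIndepFun U P)
    (c : Fin n → ℝ) (hc : ∀ i, c i = 0 ∨ c i = 1)
    (B : Fin n → Set ℝ) (hB : ∀ i, MeasurableSet (B i))
    (x : ℝ) (hx : 0 ≤ x) (A : Set Ω)
    (hsub : ∀ ω ∈ A,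
      (∫ ω', (n:ℝ)⁻¹ * (∑ i, (if U i ω' ∈ B i then c i else -(c i))) ∂P) + x / Real.sqrt n
        ≤ (n:ℝ)⁻¹ * ∑ i, (if U i ω ∈ B i then c i else -(c i))) :
    (P A).toReal ≤ Real.exp (-(x ^ 2) / 2) := by
  have hnpos : (0:ℝ) < n := by exact_mod_cast hn
  have hsn : (0:ℝ) < Real.sqrt n := Real.sqrt_pos.mpr hnpos
  have hkey := key_hoeffding P hn U hU hindepU c hc B hB x hx
  refine le_trans ?_ hkey
  apply ENNReal.toReal_mono (measure_ne_top _ _)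
  apply measure_mono
  intro ω hω
  have h1 := hsub ω hω
  simp only [Set.mem_setOf_eq]
  rw [integral_const_mul] at h1
  set I := ∫ ω', (∑ i, (if U i ω' ∈ B i then c i else -(c i))) ∂P with hI
  set Sw := ∑ i, (if U i ω ∈ B i then c i else -(c i)) with hSw
  -- h1 : n⁻¹ I + x / √n ≤ n⁻¹ Sw ; want I + √n x ≤ Sw
  have h2 : (n:ℝ) * ((n:ℝ)⁻¹ * I + x / Real.sqrt n) ≤ (n:ℝ) * ((n:ℝ)⁻¹ * Sw) :=
    mul_le_mul_of_nonneg_left h1 hnpos.le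
  have h3 : (n:ℝ) * ((n:ℝ)⁻¹ * I) = I := by field_simp
  have h4 : (n:ℝ) * (x / Real.sqrt n) = Real.sqrt n * x := by
    have hne : Real.sqrt (n:ℝ) ≠ 0 := hsn.ne'
    field_simp
    rw [Real.sq_sqrt hnpos.le]; ring
  have h5 : (n:ℝ) * ((n:ℝ)⁻¹ * Sw) = Sw := by field_simp
  rw [mul_add, h3, h4, h5] at h2
  exact h2


/-- Measurability of the test statistic as a function of ω. -/
lemma tstat_measurable {n K : ℕ} (X : Fin n → Fin K → ℝ)
    (Vu Vl : Finset (Fin K → ℝ)) (hu : Vu.Nonempty) (hl : Vl.Nonempty)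
    (ε : ℝ) (b : Fin K → ℝ) (Y : Fin n → Ω → ℝ) (hYmeas : ∀ i, Measurable (Y i)) :
    Measurable fun ω => Tstat X Vu Vl hu hl ε b (fun i => Y i ω) := by
  have hmuU : ∀ v, Measurable (fun ω => muHatU X b v (fun i => Y i ω)) := by
    intro v
    simp only [muHatU]
    exact measurable_const.mul (Finset.measurable_sum _ fun i _ =>
      (((hYmeas i).const_mul 2).sub measurable_const).mul_const _)
  have hmuL : ∀ v, Measurable (fun ω => muHatL X b v (fun i => Y i ω)) := by
    intro v
    simp only [muHatL]
    exact measurable_const.mul (Finset.measurable_sum _ fun i _ =>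
      (measurable_const.sub ((hYmeas i).const_mul 2)).mul_const _)
  have htermU : ∀ v, Measurable (fun ω => Real.sqrt n * (-(muHatU X b v (fun i => Y i ω))) /
      max (Real.sqrt (sigHatU2 X b v (fun i => Y i ω))) ε) := by
    intro v
    apply Measurable.div
    · exact ((hmuU v).neg).const_mul _
    · refine Measurable.max ?_ measurable_const
      apply Measurable.sqrt
      simp only [sigHatU2]
      exact measurable_const.sub ((hmuU v).pow_const 2)
  have htermL : ∀ v, Measurable (fun ω => Real.sqrt n * (-(muHatL X b v (fun i => Y i ω))) /
      max (Real.sqrt (sigHatL2 X b v (fun i => Y i ω))) ε) := by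
    intro v
    apply Measurable.div
    · exact ((hmuL v).neg).const_mul _
    · refine Measurable.max ?_ measurable_const
      apply Measurable.sqrt
      simp only [sigHatL2]
      exact measurable_const.sub ((hmuL v).pow_const 2)
  simp only [Tstat]
  exact measurable_const.max
    ((measurable_finset_sup' _ hu _ htermU).max (measurable_finset_sup' _ hl _ htermL))

end AuxHoeffding

/-- Corollary 2, part 2: under Assumptions 1 and 2, for any `b ∉ B*_n` the rejection
probability is at least
`1 − exp(−(1/2)·(max{0, √n·Q(b) − q_{1−α}·max{ε, (1+q²/n)^{−1/2}}})²)`. -/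

theorem corollary2_part2
    {Ω : Type*} [MeasurableSpace Ω] (P : Measure Ω) [IsProbabilityMeasure P]
    {n K : ℕ} (hn : 1 ≤ n) (hK : 1 ≤ K)
    (X : Fin n → Fin K → ℝ) (β : Fin K → ℝ)
    (U : Fin n → Ω → ℝ) (hU : ∀ i, Measurable (U i))
    (Y : Fin n → Ω → ℝ)
    (hY : ∀ i ω, Y i ω = if 0 ≤ (∑ j, X i j * β j) + U i ω then 1 else 0)
    (hmed : ∀ i, P {ω | 0 ≤ U i ω} = 1/2)
    (hindep : iIndepFun
      (fun i ω => if 0 ≤ U i ω then (1 : ℝ) else 0) P)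
    (hindepU : iIndepFun U P)
    (ε : ℝ) (hε : 0 < ε)
    (Vu Vl : Finset (Fin K → ℝ)) (hu : Vu.Nonempty) (hl : Vl.Nonempty)
    (b : Fin K → ℝ) (hb : ¬ memFSID P X Y b)
    (α : ℝ) (hα : α ∈ Set.Ioo (0 : ℝ) 1)
    (q : ℝ)
    (hq : q = sInf {c : ℝ | 1 - α ≤
      (P {ω | Tstat X Vu Vl hu hl ε b
          (fun i => if 0 ≤ U i ω then 1 else 0) ≤ c}).toReal})
    (Q : ℝ)
    (hQ : Q = max
      (-(min 0 (Vu.inf' hu fun v => ∫ ω, muHatU X b v (fun i => Y i ω) ∂P)))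
      (-(min 0 (Vl.inf' hl fun v => ∫ ω, muHatL X b v (fun i => Y i ω) ∂P)))) :
    1 - Real.exp (-(1/2) *
        (max 0 (Real.sqrt n * Q - q * max ε (Real.sqrt (1 + q ^ 2 / n))⁻¹)) ^ 2)
      ≤ (P {ω | q < Tstat X Vu Vl hu hl ε b (fun i => Y i ω)}).toReal := by
  classical
  have hnpos : (0:ℝ) < n := by exact_mod_cast hn
  have hsn : (0:ℝ) < Real.sqrt n := Real.sqrt_pos.mpr hnpos
  have hYmeas : ∀ i, Measurable (Y i) := by
    intro i
    have hfe : Y i = fun ω => if 0 ≤ (∑ j, X i j * β j) + U i ω then (1:ℝ) else 0 :=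
      funext (hY i)
    rw [hfe]
    exact Measurable.ite
      (measurableSet_le measurable_const (measurable_const.add (hU i)))
      measurable_const measurable_const
  have hy01 : ∀ i ω, Y i ω = 0 ∨ Y i ω = 1 := by
    intro i ω
    rw [hY i ω]
    by_cases h : 0 ≤ (∑ j, X i j * β j) + U i ω <;> simp [h]
  -- q is nonnegative
  have hq0 : 0 ≤ q := by
    rw [hq]
    apply Real.sInf_nonneg
    intro cst hcst
    by_contra hneg
    push_neg at hneg
    have hempty : {ω | Tstat X Vu Vl hu hl ε b
        (fun i => if 0 ≤ U i ω then 1 else 0) ≤ cst} = ∅ := by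
      rw [Set.eq_empty_iff_forall_notMem]
      intro ω hωmem
      have hTnn : (0:ℝ) ≤ Tstat X Vu Vl hu hl ε b (fun i => if 0 ≤ U i ω then 1 else 0) :=
        le_max_left 0 _
      have := Set.mem_setOf_eq ▸ hωmem
      linarith
    simp only [Set.mem_setOf_eq] at hcst
    rw [hempty] at hcst
    simp only [measure_empty, ENNReal.toReal_zero] at hcst
    linarith [hα.2]
  set M := max ε (Real.sqrt (1 + q ^ 2 / (n:ℝ)))⁻¹ with hMdef
  have hMpos : 0 < M := lt_of_lt_of_le hε (le_max_left _ _)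
  set x' := Real.sqrt n * Q - q * M with hx'def
  rcases le_or_gt x' 0 with hx0 | hxpos
  · -- trivial case: LHS = 0
    rw [max_eq_left hx0]
    norm_num
  · rw [max_eq_right hxpos.le]
    have hQpos : 0 < Q := by
      have hqM : 0 ≤ q * M := mul_nonneg hq0 hMpos.le
      nlinarith [hsn]
    set A := {ω | Tstat X Vu Vl hu hl ε b (fun i => Y i ω) ≤ q} with hAdef
    have hAmeas : MeasurableSet A :=
      measurableSet_le (tstat_measurable X Vu Vl hu hl ε b Y hYmeas) measurable_const
    have hgoalset : {ω | q < Tstat X Vu Vl hu hl ε b fun i => Y i ω} = Aᶜ := by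
      ext ω
      simp [hAdef, not_le]
    have hxdiv : x' / Real.sqrt n = Q - q * M / Real.sqrt n := by
      rw [hx'def]
      field_simp
    have hbound : (P A).toReal ≤ Real.exp (-(x' ^ 2) / 2) := by
      rcases max_cases
        (-(min 0 (Vu.inf' hu fun v => ∫ ω, muHatU X b v (fun i => Y i ω) ∂P)))
        (-(min 0 (Vl.inf' hl fun v => ∫ ω, muHatL X b v (fun i => Y i ω) ∂P)))
        with ⟨hQeq, _⟩ | ⟨hQeq, _⟩
      · -- upper moments side
        rw [hQeq] at hQ
        have hIu : Vu.inf' hu (fun v => ∫ ω, muHatU X b v (fun i => Y i ω) ∂P) = -Q := by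
          rcases min_cases (0:ℝ)
              (Vu.inf' hu fun v => ∫ ω, muHatU X b v (fun i => Y i ω) ∂P)
              with ⟨hmin, _⟩ | ⟨hmin, _⟩
          · rw [hmin] at hQ; rw [hQ] at hQpos; norm_num at hQpos
          · rw [hmin] at hQ; linarith
        obtain ⟨vs, hvsmem, hvseq⟩ :=
          Finset.exists_mem_eq_inf' hu (fun v => ∫ ω, muHatU X b v (fun i => Y i ω) ∂P)
        set c : Fin n → ℝ :=
          fun i => if 0 ≤ (∑ j, X i j * b j) ∧ (∑ j, X i j * vs j) < 0 then 1 else 0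
          with hcdef
        have hc : ∀ i, c i = 0 ∨ c i = 1 := by
          intro i
          by_cases h : 0 ≤ (∑ j, X i j * b j) ∧ (∑ j, X i j * vs j) < 0 <;>
            simp [hcdef, h]
        obtain ⟨B, hBdef⟩ : ∃ B : Fin n → Set ℝ,
            B = fun i => {u | 0 ≤ (∑ j, X i j * β j) + u} := ⟨_, rfl⟩
        have hB : ∀ i, MeasurableSet (B i) := fun i => by
          rw [hBdef]
          exact measurableSet_le measurable_const (measurable_const.add measurable_id)
        have hpoint : ∀ ω, muHatU X b vs (fun i => Y i ω)
            = (n:ℝ)⁻¹ * ∑ i, (if U i ω ∈ B i then c i else -(c i)) := by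
          intro ω
          simp only [muHatU]
          congr 1
          apply Finset.sum_congr rfl
          intro i _
          rw [hY i ω]
          by_cases h : 0 ≤ (∑ j, X i j * β j) + U i ω
          · have hmem : U i ω ∈ B i := by rw [hBdef]; exact h
            rw [if_pos h, if_pos hmem, hcdef]
            ring
          · have hmem : U i ω ∉ B i := by rw [hBdef]; exact h
            rw [if_neg h, if_neg hmem, hcdef]
            ring
        have hIval : ∫ ω', ((n:ℝ)⁻¹ * ∑ i, (if U i ω' ∈ B i then c i else -(c i))) ∂P
            = -Q := by
          have hfe : (fun ω' => (n:ℝ)⁻¹ * ∑ i, (if U i ω' ∈ B i then c i else -(c i)))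
              = fun ω' => muHatU X b vs (fun i => Y i ω') :=
            funext fun ω' => (hpoint ω').symm
          rw [hfe, ← hvseq, hIu]
        refine hoeff_event P hn U hU hindepU c hc B hB x' hxpos.le A ?_
        intro ω hω
        show (∫ ω', ((n:ℝ)⁻¹ * ∑ i, (if U i ω' ∈ B i then c i else -(c i))) ∂P)
            + x' / Real.sqrt n
            ≤ (n:ℝ)⁻¹ * ∑ i, (if U i ω ∈ B i then c i else -(c i))
        rw [hIval, ← hpoint ω]
        -- from hω : Tstat ≤ q, extract the term bound
        have hterm : Real.sqrt n * (-(muHatU X b vs (fun i => Y i ω))) /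
            max (Real.sqrt (sigHatU2 X b vs (fun i => Y i ω))) ε ≤ q := by
          have h1 : Real.sqrt n * (-(muHatU X b vs (fun i => Y i ω))) /
              max (Real.sqrt (sigHatU2 X b vs (fun i => Y i ω))) ε
              ≤ Vu.sup' hu (fun v => Real.sqrt n * (-(muHatU X b v (fun i => Y i ω))) /
                max (Real.sqrt (sigHatU2 X b v (fun i => Y i ω))) ε) :=
            Finset.le_sup' (fun v => Real.sqrt n * (-(muHatU X b v (fun i => Y i ω))) /
                max (Real.sqrt (sigHatU2 X b v (fun i => Y i ω))) ε) hvsmem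
          have h2 := hω
          simp only [hAdef, Set.mem_setOf_eq, Tstat] at h2
          calc Real.sqrt n * (-(muHatU X b vs (fun i => Y i ω))) /
              max (Real.sqrt (sigHatU2 X b vs (fun i => Y i ω))) ε
              ≤ _ := h1
            _ ≤ _ := le_max_left _ _
            _ ≤ _ := le_max_right (0:ℝ) _
            _ ≤ q := h2
        have habs : |muHatU X b vs (fun i => Y i ω)|
            ≤ (n:ℝ)⁻¹ * ∑ i, (if 0 ≤ (∑ j, X i j * b j) ∧ (∑ j, X i j * vs j) < 0
                then (1:ℝ) else 0) := by
          have := abs_avg_le (fun i => 2 * Y i ω - 1)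
            (fun i => if 0 ≤ (∑ j, X i j * b j) ∧ (∑ j, X i j * vs j) < 0
              then (1:ℝ) else 0)
            (fun i => by rcases hy01 i ω with h | h <;> simp [h] <;> norm_num)
            (fun i => by
              by_cases h : 0 ≤ (∑ j, X i j * b j) ∧ (∑ j, X i j * vs j) < 0 <;> simp [h])
          simpa [muHatU] using this
        have hp1 : (n:ℝ)⁻¹ * ∑ i, (if 0 ≤ (∑ j, X i j * b j) ∧ (∑ j, X i j * vs j) < 0
            then (1:ℝ) else 0) ≤ 1 :=
          avg_le_one hn _ (fun i => by
            by_cases h : 0 ≤ (∑ j, X i j * b j) ∧ (∑ j, X i j * vs j) < 0 <;> simp [h])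
        have harith := arith_incl hn hq0 hε hp1 habs (by
          rw [show sigHatU2 X b vs (fun i => Y i ω)
            = (n:ℝ)⁻¹ * ∑ i, (if 0 ≤ (∑ j, X i j * b j) ∧ (∑ j, X i j * vs j) < 0
                then (1:ℝ) else 0) - (muHatU X b vs (fun i => Y i ω)) ^ 2 from rfl] at hterm
          exact hterm)
        rw [hxdiv]
        have : -(q * M) / Real.sqrt n = -(q * M / Real.sqrt n) := by ring
        rw [this] at harith
        linarith
      · -- lower moments side
        rw [hQeq] at hQ
        have hIl : Vl.inf' hl (fun v => ∫ ω, muHatL X b v (fun i => Y i ω) ∂P) = -Q := by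
          rcases min_cases (0:ℝ)
              (Vl.inf' hl fun v => ∫ ω, muHatL X b v (fun i => Y i ω) ∂P)
              with ⟨hmin, _⟩ | ⟨hmin, _⟩
          · rw [hmin] at hQ; rw [hQ] at hQpos; norm_num at hQpos
          · rw [hmin] at hQ; linarith
        obtain ⟨vs, hvsmem, hvseq⟩ :=
          Finset.exists_mem_eq_inf' hl (fun v => ∫ ω, muHatL X b v (fun i => Y i ω) ∂P)
        set c : Fin n → ℝ :=
          fun i => if (∑ j, X i j * b j) ≤ 0 ∧ 0 < (∑ j, X i j * vs j) then 1 else 0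
          with hcdef
        have hc : ∀ i, c i = 0 ∨ c i = 1 := by
          intro i
          by_cases h : (∑ j, X i j * b j) ≤ 0 ∧ 0 < (∑ j, X i j * vs j) <;>
            simp [hcdef, h]
        obtain ⟨B, hBdef⟩ : ∃ B : Fin n → Set ℝ,
            B = fun i => {u | ¬ (0 ≤ (∑ j, X i j * β j) + u)} := ⟨_, rfl⟩
        have hB : ∀ i, MeasurableSet (B i) := fun i => by
          rw [hBdef]
          exact (measurableSet_le measurable_const (measurable_const.add measurable_id)).compl
        have hpoint : ∀ ω, muHatL X b vs (fun i => Y i ω)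
            = (n:ℝ)⁻¹ * ∑ i, (if U i ω ∈ B i then c i else -(c i)) := by
          intro ω
          simp only [muHatL]
          congr 1
          apply Finset.sum_congr rfl
          intro i _
          rw [hY i ω]
          by_cases h : 0 ≤ (∑ j, X i j * β j) + U i ω
          · have hmem : U i ω ∉ B i := by
              rw [hBdef]
              simp only [Set.mem_setOf_eq, not_not]
              exact h
            rw [if_pos h, if_neg hmem, hcdef]
            ring
          · have hmem : U i ω ∈ B i := by rw [hBdef]; exact h
            rw [if_neg h, if_pos hmem, hcdef]
            ring
        have hIval : ∫ ω', ((n:ℝ)⁻¹ * ∑ i, (if U i ω' ∈ B i then c i else -(c i))) ∂P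
            = -Q := by
          have hfe : (fun ω' => (n:ℝ)⁻¹ * ∑ i, (if U i ω' ∈ B i then c i else -(c i)))
              = fun ω' => muHatL X b vs (fun i => Y i ω') :=
            funext fun ω' => (hpoint ω').symm
          rw [hfe, ← hvseq, hIl]
        refine hoeff_event P hn U hU hindepU c hc B hB x' hxpos.le A ?_
        intro ω hω
        show (∫ ω', ((n:ℝ)⁻¹ * ∑ i, (if U i ω' ∈ B i then c i else -(c i))) ∂P)
            + x' / Real.sqrt n
            ≤ (n:ℝ)⁻¹ * ∑ i, (if U i ω ∈ B i then c i else -(c i))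
        rw [hIval, ← hpoint ω]
        have hterm : Real.sqrt n * (-(muHatL X b vs (fun i => Y i ω))) /
            max (Real.sqrt (sigHatL2 X b vs (fun i => Y i ω))) ε ≤ q := by
          have h1 : Real.sqrt n * (-(muHatL X b vs (fun i => Y i ω))) /
              max (Real.sqrt (sigHatL2 X b vs (fun i => Y i ω))) ε
              ≤ Vl.sup' hl (fun v => Real.sqrt n * (-(muHatL X b v (fun i => Y i ω))) /
                max (Real.sqrt (sigHatL2 X b v (fun i => Y i ω))) ε) :=
            Finset.le_sup' (fun v => Real.sqrt n * (-(muHatL X b v (fun i => Y i ω))) /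
                max (Real.sqrt (sigHatL2 X b v (fun i => Y i ω))) ε) hvsmem
          have h2 := hω
          simp only [hAdef, Set.mem_setOf_eq, Tstat] at h2
          calc Real.sqrt n * (-(muHatL X b vs (fun i => Y i ω))) /
              max (Real.sqrt (sigHatL2 X b vs (fun i => Y i ω))) ε
              ≤ _ := h1
            _ ≤ _ := le_max_right _ _
            _ ≤ _ := le_max_right (0:ℝ) _
            _ ≤ q := h2
        have habs : |muHatL X b vs (fun i => Y i ω)|
            ≤ (n:ℝ)⁻¹ * ∑ i, (if (∑ j, X i j * b j) ≤ 0 ∧ 0 < (∑ j, X i j * vs j)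
                then (1:ℝ) else 0) := by
          have := abs_avg_le (fun i => 1 - 2 * Y i ω)
            (fun i => if (∑ j, X i j * b j) ≤ 0 ∧ 0 < (∑ j, X i j * vs j)
              then (1:ℝ) else 0)
            (fun i => by rcases hy01 i ω with h | h <;> simp [h] <;> norm_num)
            (fun i => by
              by_cases h : (∑ j, X i j * b j) ≤ 0 ∧ 0 < (∑ j, X i j * vs j) <;> simp [h])
          simpa [muHatL] using this
        have hp1 : (n:ℝ)⁻¹ * ∑ i, (if (∑ j, X i j * b j) ≤ 0 ∧ 0 < (∑ j, X i j * vs j)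
            then (1:ℝ) else 0) ≤ 1 :=
          avg_le_one hn _ (fun i => by
            by_cases h : (∑ j, X i j * b j) ≤ 0 ∧ 0 < (∑ j, X i j * vs j) <;> simp [h])
        have harith := arith_incl hn hq0 hε hp1 habs (by
          rw [show sigHatL2 X b vs (fun i => Y i ω)
            = (n:ℝ)⁻¹ * ∑ i, (if (∑ j, X i j * b j) ≤ 0 ∧ 0 < (∑ j, X i j * vs j)
                then (1:ℝ) else 0) - (muHatL X b vs (fun i => Y i ω)) ^ 2 from rfl] at hterm
          exact hterm)
        rw [hxdiv]
        have : -(q * M) / Real.sqrt n = -(q * M / Real.sqrt n) := by ring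
        rw [this] at harith
        linarith
    -- conclude
    have hsum := measure_add_measure_compl (μ := P) hAmeas
    have h1 : (P A).toReal + (P Aᶜ).toReal = 1 := by
      rw [← ENNReal.toReal_add (measure_ne_top _ _) (measure_ne_top _ _), hsum,
        measure_univ, ENNReal.toReal_one]
    rw [hgoalset]
    have hhalf : -(1/2) * x' ^ 2 = -(x' ^ 2) / 2 := by ring
    rw [hhalf]
    linarith
end
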